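/- arXiv:0909.2586 — 4 statements merged into one kernel-verified Lean document; each statement's English description precedes it below -/
import Mathlib

section
/- For all a ∈ (0,1) and all (x_n)_{n≥1} ∈ ℓ²: if ℙ(|Σ_{n≥1} r_n x_n| > a) ≤ (1 - a²)²/3, then Σ_{n≥1} x_n² ≤ 1. -/
open MeasureTheory ProbabilityTheory ENNReal

section Basic
variable {Ω : Type*} [MeasurableSpace Ω] {P : Measure Ω} [IsProbabilityMeasure P]

lemma rad_ae_pm {f : Ω → ℝ} (hm : Measurable f)
    (h1 : P {ω | f ω = 1} = 1/2) (h2 : P {ω | f ω = -1} = 1/2) :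
    ∀ᵐ ω ∂P, f ω = 1 ∨ f ω = -1 := by
  have hA : MeasurableSet {ω | f ω = 1} := hm (measurableSet_singleton 1)
  have hB : MeasurableSet {ω | f ω = -1} := hm (measurableSet_singleton (-1))
  have hd : Disjoint {ω | f ω = 1} {ω | f ω = -1} := by
    rw [Set.disjoint_left]; rintro ω h1' h2'; simp only [Set.mem_setOf_eq] at *; norm_num [h1'] at h2'
  have hu : P ({ω | f ω = 1} ∪ {ω | f ω = -1}) = 1 := by
    rw [measure_union hd hB, h1, h2, ENNReal.div_add_div_same]
    rw [one_add_one_eq_two]; exact ENNReal.div_self two_ne_zero ofNat_ne_top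
  have h0 : P ({ω | f ω = 1} ∪ {ω | f ω = -1})ᶜ = 0 := by
    rw [prob_compl_eq_one_sub (hA.union hB), hu]; simp
  rw [ae_iff]
  have hset : {ω | ¬(f ω = 1 ∨ f ω = -1)} = ({ω | f ω = 1} ∪ {ω | f ω = -1})ᶜ := by
    ext ω; simp [not_or]
  rw [hset]; exact h0

end Basic

section Basic2
variable {Ω : Type*} [MeasurableSpace Ω] {P : Measure Ω} [IsProbabilityMeasure P]

lemma rad_integrable {f : Ω → ℝ} (hm : Measurable f)
    (hpm : ∀ᵐ ω ∂P, f ω = 1 ∨ f ω = -1) : Integrable f P := by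
  refine Integrable.mono' (integrable_const (1:ℝ)) hm.aestronglyMeasurable ?_
  filter_upwards [hpm] with ω hω
  rcases hω with h | h <;> simp [h]

lemma rad_integral_eq_zero {f : Ω → ℝ} (hm : Measurable f)
    (h1 : P {ω | f ω = 1} = 1/2) (h2 : P {ω | f ω = -1} = 1/2) :
    ∫ ω, f ω ∂P = 0 := by
  have hA : MeasurableSet {ω | f ω = 1} := hm (measurableSet_singleton 1)
  have hB : MeasurableSet {ω | f ω = -1} := hm (measurableSet_singleton (-1))
  have hpm := rad_ae_pm hm h1 h2
  have hae : f =ᵐ[P] fun ω => ({ω | f ω = 1}).indicator (fun _ => (1:ℝ)) ω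
      + ({ω | f ω = -1}).indicator (fun _ => (-1:ℝ)) ω := by
    filter_upwards [hpm] with ω hω
    rcases hω with h | h <;>
      simp [Set.indicator_apply, Set.mem_setOf_eq, h]
    all_goals norm_num
  rw [integral_congr_ae hae, integral_add ((integrable_const (1:ℝ)).indicator hA)
    ((integrable_const (-1:ℝ)).indicator hB), integral_indicator_const _ hA,
    integral_indicator_const _ hB, measureReal_def, measureReal_def, h1, h2]
  simp [ENNReal.toReal_div]

end Basic2

section Moments
set_option linter.unusedSectionVars false
variable {Ω : Type*} [MeasurableSpace Ω] {P : Measure Ω} [IsProbabilityMeasure P]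
variable {r : ℕ → Ω → ℝ} {x : ℕ → ℝ}

lemma int_of_bound {f : Ω → ℝ} (hm : AEStronglyMeasurable f P) (C : ℝ)
    (hb : ∀ᵐ ω ∂P, |f ω| ≤ C) : Integrable f P :=
  Integrable.mono' (integrable_const C) hm
    (by filter_upwards [hb] with ω h using by simpa using h)

lemma S_meas (hmeas : ∀ n, Measurable (r n)) (s : Finset ℕ) :
    Measurable (fun ω => ∑ n ∈ s, r n ω * x n) :=
  Finset.measurable_sum s (fun n _ => (hmeas n).mul_const _)

lemma S_bdd (hpm : ∀ n, ∀ᵐ ω ∂P, r n ω = 1 ∨ r n ω = -1) (s : Finset ℕ) :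
    ∀ᵐ ω ∂P, |∑ n ∈ s, r n ω * x n| ≤ ∑ n ∈ s, |x n| := by
  have h : ∀ᵐ ω ∂P, ∀ n ∈ s, r n ω = 1 ∨ r n ω = -1 := by
    rw [Filter.eventually_all_finset]
    exact fun n _ => hpm n
  filter_upwards [h] with ω hω
  refine (Finset.abs_sum_le_sum_abs _ _).trans (Finset.sum_le_sum fun n hn => ?_)
  rcases hω n hn with h1 | h1 <;> simp [h1]

omit [IsProbabilityMeasure P] in
lemma gS_indep (hmeas : ∀ n, Measurable (r n))
    (hind : iIndepFun r P)
    {s : Finset ℕ} {m : ℕ} (hm : m ∉ s) :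
    IndepFun (fun ω => ∑ n ∈ s, r n ω * x n) (fun ω => r m ω * x m) P := by
  have hgind : iIndepFun
      (fun n => (fun y => y * x n) ∘ r n) P :=
    hind.comp (fun n y => y * x n) (fun n => measurable_mul_const _)
  have := hgind.indepFun_finsetSum_of_notMem
    (fun n => (hmeas n).mul_const _) hm
  have heq : (∑ j ∈ s, (fun y => y * x j) ∘ r j) = fun ω => ∑ n ∈ s, r n ω * x n := by
    funext ω; simp [Function.comp]
  rwa [heq] at this

end Moments

section Moments2
set_option linter.unusedSectionVars false
variable {Ω : Type*} [MeasurableSpace Ω] {P : Measure Ω} [IsProbabilityMeasure P]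
variable {r : ℕ → Ω → ℝ} {x : ℕ → ℝ}

lemma moments (hmeas : ∀ n, Measurable (r n))
    (hind : iIndepFun r P)
    (hpm : ∀ n, ∀ᵐ ω ∂P, r n ω = 1 ∨ r n ω = -1)
    (hzero : ∀ n, ∫ ω, r n ω ∂P = 0) (s : Finset ℕ) :
    (∫ ω, (∑ n ∈ s, r n ω * x n)^2 ∂P = ∑ n ∈ s, x n^2) ∧
    (∫ ω, (∑ n ∈ s, r n ω * x n)^4 ∂P ≤ 3 * (∑ n ∈ s, x n^2)^2) := by
  classical
  induction s using Finset.induction_on with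
  | empty => simp
  | @insert m s hm ih =>
    obtain ⟨ih2, ih4⟩ := ih
    set S : Ω → ℝ := fun ω => ∑ n ∈ s, r n ω * x n with hS
    set g : Ω → ℝ := fun ω => r m ω * x m with hg
    set c : ℝ := x m with hc
    set B : ℝ := ∑ n ∈ s, |x n| with hB
    have hSmeas : Measurable S := S_meas hmeas s
    have hgmeas : Measurable g := (hmeas m).mul_const _
    have hSb : ∀ᵐ ω ∂P, |S ω| ≤ B := S_bdd hpm s
    have hgb : ∀ᵐ ω ∂P, |g ω| ≤ |c| := by
      filter_upwards [hpm m] with ω hω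
      rcases hω with h | h <;> simp [hg, h]
    have hB0 : 0 ≤ B := Finset.sum_nonneg fun n _ => abs_nonneg _
    have hintSk : ∀ k : ℕ, Integrable (fun ω => (S ω)^k) P := by
      intro k
      refine int_of_bound ((hSmeas.pow_const k).aestronglyMeasurable) (B^k) ?_
      filter_upwards [hSb] with ω h
      rw [abs_pow]
      exact pow_le_pow_left₀ (abs_nonneg _) h k
    have hintSkg : ∀ k : ℕ, Integrable (fun ω => (S ω)^k * g ω) P := by
      intro k
      refine int_of_bound (((hSmeas.pow_const k).mul hgmeas).aestronglyMeasurable) (B^k * |c|) ?_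
      filter_upwards [hSb, hgb] with ω h1 h2
      rw [abs_mul, abs_pow]
      exact mul_le_mul (pow_le_pow_left₀ (abs_nonneg _) h1 k) h2 (abs_nonneg _)
        (pow_nonneg hB0 k)
    have hintg : Integrable g P := by
      have := hintSkg 0; simpa using this
    have hindep : IndepFun S g P := gS_indep hmeas hind hm
    have hgint0 : ∫ ω, g ω ∂P = 0 := by
      rw [hg]
      simp only [integral_mul_const, hzero m, zero_mul]
    have hSkg0 : ∀ k : ℕ, ∫ ω, (S ω)^k * g ω ∂P = 0 := by
      intro k
      have hik : IndepFun (fun ω => (S ω)^k) g P :=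
        hindep.comp (measurable_id.pow_const k) measurable_id
      have := hik.integral_fun_mul_eq_mul_integral (hintSk k).aestronglyMeasurable hintg.aestronglyMeasurable
      simpa [hgint0] using this
    have hg2 : ∀ᵐ ω ∂P, (g ω)^2 = c^2 := by
      filter_upwards [hpm m] with ω hω
      rcases hω with h | h <;> simp [hg, h]
    have hsum_eq : ∀ ω, (∑ n ∈ insert m s, r n ω * x n) = g ω + S ω := by
      intro ω; rw [Finset.sum_insert hm]
    -- second moment step
    have h2 : ∫ ω, (∑ n ∈ insert m s, r n ω * x n)^2 ∂P = (∑ n ∈ s, x n^2) + c^2 := by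
      have heq : (fun ω => (∑ n ∈ insert m s, r n ω * x n)^2)
          =ᵐ[P] fun ω => ((S ω)^2 + 2 * ((S ω)^1 * g ω)) + c^2 := by
        filter_upwards [hg2] with ω hω
        rw [hsum_eq ω]
        have h' : (g ω + S ω)^2 = ((S ω)^2 + 2 * ((S ω)^1 * g ω)) + (g ω)^2 := by ring
        rw [h', hω]
      have hI1 : Integrable (fun ω => (S ω)^2 + 2 * ((S ω)^1 * g ω)) P :=
        (hintSk 2).add ((hintSkg 1).const_mul 2)
      have hI2 : Integrable (fun ω => 2 * ((S ω)^1 * g ω)) P := (hintSkg 1).const_mul 2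
      rw [integral_congr_ae heq, integral_add hI1 (integrable_const _),
        integral_add (hintSk 2) hI2, integral_const_mul, hSkg0 1, ih2]
      simp
    constructor
    · rw [h2, Finset.sum_insert hm]; ring
    · -- fourth moment step
      have heq : (fun ω => (∑ n ∈ insert m s, r n ω * x n)^4)
          =ᵐ[P] fun ω => (((S ω)^4 + 4 * ((S ω)^3 * g ω)) + 6 * c^2 * (S ω)^2)
            + (4 * c^2 * ((S ω)^1 * g ω) + c^4) := by
        filter_upwards [hg2] with ω hω
        rw [hsum_eq ω]
        have h' : (g ω + S ω)^4 = (((S ω)^4 + 4 * ((S ω)^3 * g ω)) + 6 * (g ω)^2 * (S ω)^2)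
            + (4 * (g ω)^2 * ((S ω)^1 * g ω) + ((g ω)^2)^2) := by ring
        rw [h', hω]
        ring
      have hIa : Integrable (fun ω => (S ω)^4 + 4 * ((S ω)^3 * g ω)) P :=
        (hintSk 4).add ((hintSkg 3).const_mul 4)
      have hIb : Integrable (fun ω => ((S ω)^4 + 4 * ((S ω)^3 * g ω)) + 6 * c^2 * (S ω)^2) P :=
        hIa.add ((hintSk 2).const_mul (6 * c^2))
      have hIc : Integrable (fun ω => 4 * c^2 * ((S ω)^1 * g ω)) P :=
        (hintSkg 1).const_mul (4 * c^2)
      have hId : Integrable (fun ω => 4 * c^2 * ((S ω)^1 * g ω) + c^4) P :=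
        hIc.add (integrable_const _)
      have h4 : ∫ ω, (∑ n ∈ insert m s, r n ω * x n)^4 ∂P
          = ∫ ω, (S ω)^4 ∂P + 6 * c^2 * (∑ n ∈ s, x n^2) + c^4 := by
        rw [integral_congr_ae heq, integral_add hIb hId,
          integral_add hIa ((hintSk 2).const_mul (6 * c^2)),
          integral_add (hintSk 4) ((hintSkg 3).const_mul 4),
          integral_add hIc (integrable_const _),
          integral_const_mul, integral_const_mul, integral_const_mul,
          hSkg0 3, hSkg0 1, ih2]
        simp
      rw [h4, Finset.sum_insert hm]
      have hσ0 : (0:ℝ) ≤ ∑ n ∈ s, x n^2 := Finset.sum_nonneg fun n _ => sq_nonneg _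
      nlinarith [ih4, sq_nonneg (c^2), sq_nonneg c]

end Moments2

section PZ
set_option linter.unusedSectionVars false
variable {Ω : Type*} [MeasurableSpace Ω] {P : Measure Ω} [IsProbabilityMeasure P]
variable {r : ℕ → Ω → ℝ} {x : ℕ → ℝ}

lemma paley_zygmund (hmeas : ∀ n, Measurable (r n))
    (hind : iIndepFun r P)
    (hpm : ∀ n, ∀ᵐ ω ∂P, r n ω = 1 ∨ r n ω = -1)
    (hzero : ∀ n, ∫ ω, r n ω ∂P = 0) (s : Finset ℕ) (b : ℝ)
    (hpos : 0 ≤ (∑ n ∈ s, x n^2) - b^2) :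
    ((∑ n ∈ s, x n^2) - b^2)^2
      ≤ 3 * (∑ n ∈ s, x n^2)^2 * (P {ω | b < |∑ n ∈ s, r n ω * x n|}).toReal := by
  classical
  obtain ⟨ih2, ih4⟩ := moments (x := x) hmeas hind hpm hzero s
  set S : Ω → ℝ := fun ω => ∑ n ∈ s, r n ω * x n with hS
  set σ : ℝ := ∑ n ∈ s, x n^2 with hσ
  set B : ℝ := ∑ n ∈ s, |x n| with hB
  have hSmeas : Measurable S := S_meas hmeas s
  have hSb : ∀ᵐ ω ∂P, |S ω| ≤ B := S_bdd hpm s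
  have hB0 : 0 ≤ B := Finset.sum_nonneg fun n _ => abs_nonneg _
  set A : Set Ω := {ω | b < |S ω|} with hA
  have hAmeas : MeasurableSet A := measurableSet_lt measurable_const hSmeas.abs
  set χ : Ω → ℝ := A.indicator (fun _ => 1) with hχ
  have hχmeas : Measurable χ := measurable_const.indicator hAmeas
  have hχ01 : ∀ ω, χ ω = 0 ∨ χ ω = 1 := by
    intro ω
    by_cases hω : ω ∈ A <;> simp [hχ, hω]
  have hintS2 : Integrable (fun ω => (S ω)^2) P := by
    refine int_of_bound ((hSmeas.pow_const 2).aestronglyMeasurable) (B^2) ?_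
    filter_upwards [hSb] with ω h
    rw [abs_pow]
    exact pow_le_pow_left₀ (abs_nonneg _) h 2
  have hintS2χ : Integrable (fun ω => (S ω)^2 * χ ω) P := by
    refine int_of_bound ((hSmeas.pow_const 2).mul hχmeas).aestronglyMeasurable (B^2) ?_
    filter_upwards [hSb] with ω h
    rw [abs_mul, abs_pow]
    rcases hχ01 ω with h0 | h0 <;> simp only [h0, abs_zero, abs_one, mul_zero, mul_one]
    · positivity
    · exact pow_le_pow_left₀ (abs_nonneg _) h 2
  -- Step 1 : σ - b² ≤ ∫ S² χ
  have step1 : σ - b^2 ≤ ∫ ω, (S ω)^2 * χ ω ∂P := by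
    have hptwise : ∀ ω, (S ω)^2 ≤ (S ω)^2 * χ ω + b^2 := by
      intro ω
      by_cases hω : ω ∈ A
      · have : χ ω = 1 := by simp [hχ, hω]
        rw [this, mul_one]
        nlinarith [sq_nonneg b]
      · have h1 : χ ω = 0 := by simp [hχ, hω]
        have h2 : |S ω| ≤ b := le_of_not_gt hω
        have h3 : (S ω)^2 ≤ b^2 := by
          rw [← sq_abs]
          exact pow_le_pow_left₀ (abs_nonneg _) h2 2
        rw [h1, mul_zero, zero_add]
        exact h3
    have hIadd : Integrable (fun ω => (S ω)^2 * χ ω + b^2) P :=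
      hintS2χ.add (integrable_const _)
    have := integral_mono hintS2 hIadd hptwise
    rw [ih2] at this
    rw [integral_add hintS2χ (integrable_const _), integral_const] at this
    simp only [probReal_univ, measure_univ, ENNReal.toReal_one, smul_eq_mul, one_mul] at this
    linarith
  -- Step 2 : Cauchy-Schwarz
  have hMp1 : MemLp (fun ω => (S ω)^2) (ENNReal.ofReal 2) P := by
    refine MemLp.of_bound (hSmeas.pow_const 2).aestronglyMeasurable (B^2) ?_
    filter_upwards [hSb] with ω h
    rw [Real.norm_eq_abs, abs_pow]
    exact pow_le_pow_left₀ (abs_nonneg _) h 2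
  have hMp2 : MemLp χ (ENNReal.ofReal 2) P := by
    refine MemLp.of_bound hχmeas.aestronglyMeasurable 1 ?_
    filter_upwards with ω
    rcases hχ01 ω with h0 | h0 <;> simp [h0]
  have hconj : Real.HolderConjugate 2 2 := (Real.holderConjugate_iff_eq_conjExponent (by norm_num)).2 (by norm_num)
  have hCS := integral_mul_le_Lp_mul_Lq_of_nonneg hconj
    (Filter.Eventually.of_forall fun ω => sq_nonneg (S ω))
    (Filter.Eventually.of_forall fun ω => by rcases hχ01 ω with h0 | h0 <;> simp [h0])
    hMp1 hMp2
  -- simplify the rpow's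
  have e1 : ∫ ω, ((S ω)^2) ^ (2:ℝ) ∂P = ∫ ω, (S ω)^4 ∂P := by
    refine integral_congr_ae (Filter.Eventually.of_forall fun ω => ?_)
    show ((S ω)^2) ^ (2:ℝ) = (S ω)^4
    rw [show (2:ℝ) = ((2:ℕ):ℝ) by norm_num, Real.rpow_natCast]
    ring
  have e2 : ∫ ω, (χ ω) ^ (2:ℝ) ∂P = (P A).toReal := by
    have : ∫ ω, (χ ω) ^ (2:ℝ) ∂P = ∫ ω, χ ω ∂P := by
      refine integral_congr_ae (Filter.Eventually.of_forall fun ω => ?_)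
      show (χ ω) ^ (2:ℝ) = χ ω
      rcases hχ01 ω with h0 | h0 <;> rw [h0]
      · exact Real.zero_rpow two_ne_zero
      · exact Real.one_rpow _
    rw [this, hχ, integral_indicator_const _ hAmeas]
    simp [measureReal_def]
  rw [e1, e2] at hCS
  have hS4nn : 0 ≤ ∫ ω, (S ω)^4 ∂P :=
    integral_nonneg fun ω => by positivity
  have hPAnn : 0 ≤ (P A).toReal := ENNReal.toReal_nonneg
  have hsqrt : ∫ ω, (S ω)^2 * χ ω ∂P
      ≤ Real.sqrt (∫ ω, (S ω)^4 ∂P) * Real.sqrt ((P A).toReal) := by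
    rw [Real.sqrt_eq_rpow, Real.sqrt_eq_rpow]
    exact hCS
  have key : (σ - b^2)^2 ≤ (∫ ω, (S ω)^4 ∂P) * (P A).toReal := by
    have h1 : (σ - b^2)^2 ≤ (Real.sqrt (∫ ω, (S ω)^4 ∂P) * Real.sqrt ((P A).toReal))^2 :=
      pow_le_pow_left₀ hpos (step1.trans hsqrt) 2
    calc (σ - b^2)^2 ≤ (Real.sqrt (∫ ω, (S ω)^4 ∂P) * Real.sqrt ((P A).toReal))^2 := h1
      _ = (∫ ω, (S ω)^4 ∂P) * (P A).toReal := by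
          rw [mul_pow, Real.sq_sqrt hS4nn, Real.sq_sqrt hPAnn]
  calc (σ - b^2)^2 ≤ (∫ ω, (S ω)^4 ∂P) * (P A).toReal := key
    _ ≤ 3 * σ^2 * (P A).toReal := mul_le_mul_of_nonneg_right ih4 hPAnn

end PZ

/-- A Rademacher sequence: independent random variables taking the values `1` and `-1`,
each with probability `1/2`. -/
def IsRademacherSeq {Ω : Type*} [MeasurableSpace Ω] (P : Measure Ω) (r : ℕ → Ω → ℝ) : Prop :=
  (∀ n, Measurable (r n)) ∧
  iIndepFun r P ∧
  (∀ n, P {ω | r n ω = 1} = 1/2 ∧ P {ω | r n ω = -1} = 1/2)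

set_option maxHeartbeats 1000000 in
/-- `L⁰`-version of Khintchine's inequality: for `a ∈ (0,1)`, if
`ℙ(|∑ r_n x_n| > a) ≤ (1 - a²)²/3` then `∑ x_n² ≤ 1`. -/
theorem khintchine_L0
    {Ω : Type*} [MeasurableSpace Ω] (P : Measure Ω) [IsProbabilityMeasure P]
    (r : ℕ → Ω → ℝ) (hr : IsRademacherSeq P r)
    (a : ℝ) (ha : a ∈ Set.Ioo (0:ℝ) 1)
    (x : ℕ → ℝ) (hx : Summable (fun n => x n ^ 2))
    (ξ : Ω → ℝ) (hξ : ∀ᵐ ω ∂P, HasSum (fun n => r n ω * x n) (ξ ω))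
    (h : P {ω | |ξ ω| > a} ≤ ENNReal.ofReal ((1 - a ^ 2) ^ 2 / 3)) :
    ∑' n, x n ^ 2 ≤ 1 := by
  classical
  obtain ⟨hmeas, hind, hhalf⟩ := hr
  obtain ⟨ha0, ha1⟩ := ha
  have hpm : ∀ n, ∀ᵐ ω ∂P, r n ω = 1 ∨ r n ω = -1 :=
    fun n => rad_ae_pm (hmeas n) (hhalf n).1 (hhalf n).2
  have hzero : ∀ n, ∫ ω, r n ω ∂P = 0 :=
    fun n => rad_integral_eq_zero (hmeas n) (hhalf n).1 (hhalf n).2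
  by_contra hcon
  push_neg at hcon
  set σ : ℝ := ∑' n, x n ^ 2 with hσdef
  have hσ1 : 1 < σ := hcon
  have hσ0 : 0 < σ := lt_trans one_pos hσ1
  have hA2 : 0 < a^2 := by positivity
  have ha2_1 : a^2 < 1 := by nlinarith
  set t : ℝ := a^2 * (1 + σ) / 2 with htdef
  have hprod : 0 < a^2 * (σ - 1) := mul_pos hA2 (by linarith)
  have ht1 : a^2 < t := by rw [htdef]; nlinarith [hprod]
  have ht2 : t < a^2 * σ := by rw [htdef]; nlinarith [hprod]
  have ht0 : 0 < t := lt_trans hA2 ht1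
  have htσ : t < σ := by
    rw [htdef]
    nlinarith [mul_pos (show (0:ℝ) < 1 - a^2 by linarith) (show (0:ℝ) < 1 + σ by linarith)]
  set b : ℝ := Real.sqrt t with hbdef
  have hb2 : b^2 = t := Real.sq_sqrt ht0.le
  have hab : a < b := (Real.lt_sqrt ha0.le).2 ht1
  set K : ℝ := (1 - a^2)^2 / 3 with hKdef
  have hKlt : K < (σ - t)^2 / (3 * σ^2) := by
    rw [hKdef, div_lt_div_iff₀ (by norm_num) (by positivity)]
    have h1 : σ * (1 - a^2) < σ - t := by nlinarith [ht2]
    have h2 : 0 < σ * (1 - a^2) := mul_pos hσ0 (by linarith)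
    have h3 : (σ * (1 - a^2))^2 < (σ - t)^2 := by nlinarith [h1, h2]
    nlinarith [h3]
  set c : ℝ := ((σ - t)^2 / (3 * σ^2) + K) / 2 with hcdef
  have hKc : K < c := by
    rw [hcdef]; linarith
  have hc2 : 3 * c * σ^2 < (σ - t)^2 := by
    have hlt : c < (σ - t)^2 / (3 * σ^2) := by rw [hcdef]; linarith
    rw [lt_div_iff₀ (by positivity)] at hlt
    nlinarith [hlt]
  set σN : ℕ → ℝ := fun N => ∑ n ∈ Finset.range N, x n ^ 2 with hσNdef
  have hσNlim : Filter.Tendsto σN Filter.atTop (nhds σ) := hx.hasSum.tendsto_sum_nat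
  have hev1 : ∀ᶠ N in Filter.atTop, t < σN N := hσNlim.eventually (eventually_gt_nhds htσ)
  have hev2 : ∀ᶠ N in Filter.atTop, 3 * c * (σN N)^2 < (σN N - t)^2 := by
    have hlim2 : Filter.Tendsto (fun N => (σN N - t)^2 - 3 * c * (σN N)^2) Filter.atTop
        (nhds ((σ - t)^2 - 3 * c * σ^2)) :=
      ((hσNlim.sub_const t).pow 2).sub ((hσNlim.pow 2).const_mul (3 * c))
    have := hlim2.eventually (eventually_gt_nhds (by linarith : (0:ℝ) < (σ - t)^2 - 3 * c * σ^2))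
    filter_upwards [this] with N hN
    linarith
  obtain ⟨N₀, hN₀⟩ := Filter.eventually_atTop.1 (hev1.and hev2)
  set A : ℕ → Set Ω := fun N => {ω | b < |∑ n ∈ Finset.range N, r n ω * x n|} with hAdef
  have hAmeas : ∀ N, MeasurableSet (A N) :=
    fun N => measurableSet_lt measurable_const (S_meas hmeas _).abs
  have hPA : ∀ N, N₀ ≤ N → ENNReal.ofReal c ≤ P (A N) := by
    intro N hN
    obtain ⟨h1, h2⟩ := hN₀ N hN
    have hpz := paley_zygmund (x := x) hmeas hind hpm hzero (Finset.range N) b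
      (by rw [hb2]; linarith)
    rw [hb2] at hpz
    have hσNpos : 0 < σN N := lt_trans ht0 h1
    have hσN2 : 0 < (σN N)^2 := pow_pos hσNpos 2
    have h5 : 3 * c * (σN N)^2 < 3 * (σN N)^2 * (P (A N)).toReal := lt_of_lt_of_le h2 hpz
    have hc3 : c < (P (A N)).toReal := by
      refine lt_of_mul_lt_mul_right ?_ (by positivity : (0:ℝ) ≤ 3 * (σN N)^2)
      nlinarith [h5]
    exact ENNReal.ofReal_le_of_le_toReal hc3.le
  set Bs : ℕ → Set Ω := fun N => ⋃ M, ⋃ (_ : N ≤ M), A M with hBdef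
  have hBmeas : ∀ N, MeasurableSet (Bs N) :=
    fun N => MeasurableSet.iUnion fun M => MeasurableSet.iUnion fun _ => hAmeas M
  have hBanti : Antitone Bs := by
    intro N M hNM ω hω
    simp only [hBdef, Set.mem_iUnion] at hω ⊢
    obtain ⟨K', hK', hmem⟩ := hω
    exact ⟨K', le_trans hNM hK', hmem⟩
  have hPB : ∀ N, ENNReal.ofReal c ≤ P (Bs N) := by
    intro N
    refine le_trans (hPA (max N N₀) (le_max_right _ _)) (measure_mono ?_)
    intro ω hω
    simp only [hBdef, Set.mem_iUnion]
    exact ⟨max N N₀, le_max_left _ _, hω⟩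
  have hlim := tendsto_measure_iInter_atTop (fun N => (hBmeas N).nullMeasurableSet) hBanti
    ⟨0, measure_ne_top P _⟩
  have hPL : ENNReal.ofReal c ≤ P (⋂ N, Bs N) :=
    ge_of_tendsto hlim (Filter.Eventually.of_forall hPB)
  have hsub : ∀ᵐ ω ∂P, ω ∈ (⋂ N, Bs N) → ω ∈ {ω | |ξ ω| > a} := by
    filter_upwards [hξ] with ω hω hmem
    have hconv : Filter.Tendsto (fun N => ∑ n ∈ Finset.range N, r n ω * x n)
        Filter.atTop (nhds (ξ ω)) := hω.tendsto_sum_nat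
    by_contra hlt
    simp only [Set.mem_setOf_eq, not_lt] at hlt
    have habs : Filter.Tendsto (fun N => |∑ n ∈ Finset.range N, r n ω * x n|)
        Filter.atTop (nhds (|ξ ω|)) := hconv.abs
    have hev : ∀ᶠ N in Filter.atTop, |∑ n ∈ Finset.range N, r n ω * x n| < b :=
      habs.eventually (eventually_lt_nhds (lt_of_le_of_lt hlt hab))
    obtain ⟨N, hN⟩ := Filter.eventually_atTop.1 hev
    have hmem' := Set.mem_iInter.1 hmem N
    simp only [hBdef, hAdef, Set.mem_iUnion, Set.mem_setOf_eq] at hmem'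
    obtain ⟨M, hM, hbM⟩ := hmem'
    exact absurd hbM (not_lt.2 (hN M hM).le)
  have hle : P (⋂ N, Bs N) ≤ P {ω | |ξ ω| > a} := measure_mono_ae hsub
  have hfinal : ENNReal.ofReal c ≤ ENNReal.ofReal K := le_trans hPL (le_trans hle h)
  have hcK : c ≤ K := by
    have hK0 : 0 ≤ K := by positivity
    exact (ENNReal.ofReal_le_ofReal_iff hK0).1 hfinal
  linarith
end

section
/- Let η = Σ_{n≥1} r_n x_n with 0 < Σ_{n≥1} x_n² < ∞. Then ℙ(η = 0) ≤ 1 − 2 e^{−2+γ} (≈ 0.517), where γ is Euler's constant. -/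
open MeasureTheory ProbabilityTheory ENNReal

section Aux
open Real ENNReal Filter


lemma exp_85_lt : Real.exp (8/5) < 5 := by
  have h8 : Real.exp 8 < 3125 := by
    have h := Real.exp_one_lt_d9
    calc Real.exp 8 = Real.exp 1 ^ (8:ℕ) := by
          rw [← Real.exp_nat_mul]; norm_num
      _ < 2.7182818286 ^ (8:ℕ) := by
          exact pow_lt_pow_left₀ h (Real.exp_pos 1).le (by norm_num)
      _ < 3125 := by norm_num
  have h5 : Real.exp (8/5) ^ (5:ℕ) = Real.exp 8 := by
    rw [← Real.exp_nat_mul]; norm_num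
  have : Real.exp (8/5) ^ (5:ℕ) < 5 ^ (5:ℕ) := by rw [h5]; norm_num [h8]
  exact lt_of_pow_lt_pow_left₀ 5 (by norm_num) this

lemma gamma_bound : Real.exp (-2 + Real.eulerMascheroniConstant) < 1/4 := by
  have h := Real.eulerMascheroniConstant_lt_eulerMascheroniSeq' 20
  have hseq : Real.eulerMascheroniSeq' 20 = (harmonic 20 : ℝ) - Real.log 20 := by
    rw [Real.eulerMascheroniSeq']; norm_num
  have hh : (harmonic 20 : ℝ) < 18/5 := by
    have h : (harmonic 20 : ℚ) < 18/5 := by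
      norm_num [harmonic, Finset.sum_range_succ]
    have := (Rat.cast_lt (K := ℝ)).2 h
    simpa using this
  have hlog : Real.exp (-2 + Real.eulerMascheroniConstant) < Real.exp (8/5 - Real.log 20) := by
    apply Real.exp_lt_exp.2
    rw [hseq] at h
    linarith
  have h20 : Real.exp (8/5 - Real.log 20) = Real.exp (8/5) / 20 := by
    rw [Real.exp_sub, Real.exp_log]; norm_num
  have := exp_85_lt
  rw [h20] at hlog
  linarith

lemma half_le : (1/2 : ℝ≥0∞) ≤ ENNReal.ofReal (1 - 2 * Real.exp (-2 + Real.eulerMascheroniConstant)) := by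
  have h := gamma_bound
  have : (1/2 : ℝ) ≤ 1 - 2 * Real.exp (-2 + Real.eulerMascheroniConstant) := by linarith
  calc (1/2 : ℝ≥0∞) = ENNReal.ofReal (1/2) := by
        rw [ENNReal.ofReal_div_of_pos] <;> norm_num
    _ ≤ _ := ENNReal.ofReal_le_ofReal this


private theorem rademacher_half_bound {Ω : Type*} [mΩ : MeasurableSpace Ω] (P : Measure Ω) [IsProbabilityMeasure P]
    (r : ℕ → Ω → ℝ)
    (hmeas : ∀ n, Measurable (r n))
    (hindep : iIndepFun r P)
    (hval : ∀ n, P {ω | r n ω = 1} = 1/2 ∧ P {ω | r n ω = -1} = 1/2)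
    (x : ℕ → ℝ) (hx : Summable (fun n => x n ^ 2)) (hx0 : 0 < ∑' n, x n ^ 2)
    (η : Ω → ℝ) (hη : ∀ᵐ ω ∂P, HasSum (fun n => r n ω * x n) (η ω)) :
    P {ω | η ω = 0} ≤ 1/2 := by
  classical
  -- find an index with nonzero coefficient
  obtain ⟨n₀, hx₀⟩ : ∃ n₀, x n₀ ≠ 0 := by
    by_contra h
    push_neg at h
    simp [h] at hx0
  set s : ℕ → MeasurableSpace Ω := fun n => Real.measurableSpace.comap (r n) with hs_def
  have hs_le : ∀ n, s n ≤ mΩ := fun n => (hmeas n).comap_le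
  have hIndep : Indep (⨆ n ∈ ({n₀} : Set ℕ), s n) (⨆ n ∈ ({n₀} : Set ℕ)ᶜ, s n) P :=
    indep_biSup_compl hs_le hindep {n₀}
  have hm₂_le : (⨆ n ∈ ({n₀} : Set ℕ)ᶜ, s n) ≤ mΩ := iSup₂_le fun n _ => hs_le n
  -- partial sums excluding n₀ and their limsup
  set S : ℕ → Ω → ℝ := fun N ω => ∑ n ∈ Finset.range N \ {n₀}, r n ω * x n with hS_def
  have hS_meas : ∀ N, Measurable[⨆ n ∈ ({n₀} : Set ℕ)ᶜ, s n] (S N) := by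
    intro N
    apply Finset.measurable_sum
    intro n hn
    have hn₀ : n ∈ ({n₀} : Set ℕ)ᶜ := by
      simp only [Finset.mem_sdiff, Finset.mem_singleton] at hn
      simpa using hn.2
    have h1 : Measurable[s n] (r n) := Measurable.of_comap_le le_rfl
    exact (h1.mono (le_biSup s hn₀) le_rfl).mul_const _
  set ξ : Ω → ℝ := fun ω => limsup (fun N => S N ω) atTop with hξ_def
  have hξ_meas : Measurable[⨆ n ∈ ({n₀} : Set ℕ)ᶜ, s n] ξ := Measurable.limsup hS_meas
  set C : Set Ω := ξ ⁻¹' {-x n₀} with hC_def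
  set C' : Set Ω := ξ ⁻¹' {x n₀} with hC'_def
  have hC : MeasurableSet[⨆ n ∈ ({n₀} : Set ℕ)ᶜ, s n] C := hξ_meas (measurableSet_singleton _)
  have hC' : MeasurableSet[⨆ n ∈ ({n₀} : Set ℕ)ᶜ, s n] C' := hξ_meas (measurableSet_singleton _)
  set A : Set Ω := {ω | r n₀ ω = 1} with hA_def
  set B : Set Ω := {ω | r n₀ ω = -1} with hB_def
  have hA : MeasurableSet[⨆ n ∈ ({n₀} : Set ℕ), s n] A := by
    have h1 : Measurable[s n₀] (r n₀) := Measurable.of_comap_le le_rfl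
    have := (h1.mono (le_biSup s (Set.mem_singleton n₀)) le_rfl) (measurableSet_singleton (1:ℝ))
    simpa [hA_def, Set.preimage] using this
  have hB : MeasurableSet[⨆ n ∈ ({n₀} : Set ℕ), s n] B := by
    have h1 : Measurable[s n₀] (r n₀) := Measurable.of_comap_le le_rfl
    have := (h1.mono (le_biSup s (Set.mem_singleton n₀)) le_rfl) (measurableSet_singleton (-1:ℝ))
    simpa [hB_def, Set.preimage] using this
  have hprodA : P (A ∩ C) = P A * P C := (Indep_iff _ _ _).1 hIndep A C hA hC
  have hprodB : P (B ∩ C') = P B * P C' := (Indep_iff _ _ _).1 hIndep B C' hB hC'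
  have hAmeas : MeasurableSet A := (hmeas n₀) (measurableSet_singleton (1:ℝ))
  have hBmeas : MeasurableSet B := (hmeas n₀) (measurableSet_singleton (-1:ℝ))
  have hCmeas : MeasurableSet C := hm₂_le _ hC
  have hC'meas : MeasurableSet C' := hm₂_le _ hC'
  -- almost surely r n₀ = ±1
  have hABdisj : Disjoint A B := by
    rw [Set.disjoint_left]
    intro ω hωA hωB
    have h1 : r n₀ ω = 1 := hωA
    have h2 : r n₀ ω = -1 := hωB
    rw [h1] at h2
    norm_num at h2
  have hABfull : P (A ∪ B) = 1 := by
    rw [measure_union hABdisj hBmeas, (hval n₀).1, (hval n₀).2, ENNReal.add_halves]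
  have hcompl : P ((A ∪ B)ᶜ) = 0 := by
    rw [measure_compl (hAmeas.union hBmeas) (measure_ne_top P _), hABfull, measure_univ,
      tsub_self]
  have hae : ∀ᵐ ω ∂P, ω ∈ A ∪ B := by
    rw [ae_iff]
    convert hcompl using 2
    rfl
  have hgood := hη.and hae
  set T : Set Ω := {ω | ¬ (HasSum (fun n => r n ω * x n) (η ω) ∧ ω ∈ A ∪ B)} with hT_def
  have hT : P T = 0 := ae_iff.mp hgood
  -- key inclusion
  have hincl : {ω | η ω = 0} ⊆ (A ∩ C) ∪ (B ∩ C') ∪ T := by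
    intro ω hω
    by_cases hωT : ω ∈ T
    · exact Or.inr hωT
    · left
      have hQ : HasSum (fun n => r n ω * x n) (η ω) ∧ ω ∈ A ∪ B := not_not.mp hωT
      obtain ⟨hsum, hab⟩ := hQ
      have hη0 : η ω = 0 := hω
      have hTend0 : Tendsto (fun N => ∑ n ∈ Finset.range N, r n ω * x n) atTop
          (nhds (η ω)) := hsum.tendsto_sum_nat
      have hEq : ∀ᶠ N in atTop,
          (fun N => (∑ n ∈ Finset.range N, r n ω * x n) - r n₀ ω * x n₀) N = S N ω := by
        filter_upwards [eventually_ge_atTop (n₀+1)] with N hN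
        have hsub : {n₀} ⊆ Finset.range N := by
          simp only [Finset.singleton_subset_iff, Finset.mem_range]; omega
        simp only [hS_def]
        rw [Finset.sum_sdiff_eq_sub hsub, Finset.sum_singleton]
      have hTend : Tendsto (fun N => S N ω) atTop (nhds (η ω - r n₀ ω * x n₀)) :=
        (hTend0.sub_const _).congr' hEq
      have hξω : ξ ω = η ω - r n₀ ω * x n₀ := hTend.limsup_eq
      rcases hab with hab | hab
      · left
        refine ⟨hab, ?_⟩
        have h1 : r n₀ ω = 1 := hab
        simp only [hC_def, Set.mem_preimage, Set.mem_singleton_iff]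
        rw [hξω, hη0, h1]; ring
      · right
        refine ⟨hab, ?_⟩
        have h1 : r n₀ ω = -1 := hab
        simp only [hC'_def, Set.mem_preimage, Set.mem_singleton_iff]
        rw [hξω, hη0, h1]; ring
  have hCC'disj : Disjoint C C' := by
    rw [Set.disjoint_left]
    intro ω h1 h2
    have e1 : ξ ω = -x n₀ := h1
    have e2 : ξ ω = x n₀ := h2
    rw [e1] at e2
    apply hx₀
    linarith
  calc P {ω | η ω = 0} ≤ P ((A ∩ C) ∪ (B ∩ C') ∪ T) := measure_mono hincl
    _ ≤ P ((A ∩ C) ∪ (B ∩ C')) + P T := measure_union_le _ _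
    _ = P ((A ∩ C) ∪ (B ∩ C')) := by rw [hT, add_zero]
    _ ≤ P (A ∩ C) + P (B ∩ C') := measure_union_le _ _
    _ = 1/2 * P C + 1/2 * P C' := by rw [hprodA, hprodB, (hval n₀).1, (hval n₀).2]
    _ = 1/2 * (P C + P C') := by ring
    _ = 1/2 * P (C ∪ C') := by rw [measure_union hCC'disj hC'meas]
    _ ≤ 1/2 * 1 := by
        gcongr
        exact prob_le_one
    _ = 1/2 := mul_one _

end Aux

/-- A nonzero Rademacher sum `η = ∑ r_n x_n` satisfies
`ℙ(η = 0) ≤ 1 - 2 e^{-2+γ}`, where `γ` is the Euler–Mascheroni constant. -/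
theorem rademacher_sum_zero_prob_le
    {Ω : Type*} [MeasurableSpace Ω] (P : Measure Ω) [IsProbabilityMeasure P]
    (r : ℕ → Ω → ℝ) (hr : IsRademacherSeq P r)
    (x : ℕ → ℝ) (hx : Summable (fun n => x n ^ 2)) (hx0 : 0 < ∑' n, x n ^ 2)
    (η : Ω → ℝ) (hη : ∀ᵐ ω ∂P, HasSum (fun n => r n ω * x n) (η ω)) :
    P {ω | η ω = 0} ≤
      ENNReal.ofReal (1 - 2 * Real.exp (-2 + Real.eulerMascheroniConstant)) := by
  obtain ⟨hmeas, hindep, hval⟩ := hr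
  exact (rademacher_half_bound P r hmeas hindep hval x hx hx0 η hη).trans half_le
end

section
/- Let 0 < p < ∞ and let w ∈ L^q(Ω) for some q > p, and assume ℙ(w ≠ 0) > 1 − 2 e^{−2+γ} (≈ 0.483), where γ is Euler's constant. Then there exist constants C₁ = C₁(p,w) > 0 and C₂ = C₂(p,w) > 0, independent of the sequence (x_n), such that for every (x_n)_{n≥1} ∈ ℓ² and ξ = Σ_{n≥1} r_n x_n one has C₁⁻¹ (Σ_{n≥1} x_n²)^{1/2} ≤ ‖w ξ‖_p ≤ C₂ (Σ_{n≥1} x_n²)^{1/2}. -/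
open MeasureTheory ProbabilityTheory ENNReal Real Filter

set_option linter.unusedSectionVars false
set_option linter.unusedVariables false
set_option maxHeartbeats 1000000

lemma aux_cos_le_exp {u : ℝ} (h : |u| ≤ 1/2) : Real.cos u ≤ Real.exp (-(u^2/2)) := by
  have e1 : |u|^4 = u^4 := by rw [← abs_pow]; exact abs_of_nonneg (by positivity)
  have hu2 : u^2 ≤ 1/4 := by nlinarith [sq_abs u, abs_nonneg u]
  have h1 := (abs_le.1 (Real.cos_bound (h.trans (by norm_num)))).2
  rw [e1] at h1
  have h2 := (abs_le.1 (Real.exp_bound (x := -(u^2/2))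
    (by rw [abs_neg, abs_of_nonneg (by positivity)]; linarith) (n := 3) (by norm_num))).1
  rw [abs_neg, abs_of_nonneg (by positivity : (0:ℝ) ≤ u^2/2)] at h2
  norm_num [Finset.sum_range_succ, Nat.factorial] at h2
  -- h2 : 1 - u^2/2 + (u^2/2)^2/2 - exp(-(u^2/2)) ≤ (u^2/2)^3 * (2/9)  (some arrangement)
  have h6 : u^4*u^2 ≤ u^4*(1/4) := by
    apply mul_le_mul_of_nonneg_left hu2 (by positivity)
  nlinarith [sq_nonneg u, sq_nonneg (u^2), pow_nonneg (sq_nonneg u) 2]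

lemma aux_cosh_le_exp {u : ℝ} (h : |u| ≤ 1) : Real.cosh u ≤ Real.exp (u^2/2) := by
  have e1 : |u|^4 = u^4 := by rw [← abs_pow]; exact abs_of_nonneg (by positivity)
  have h2 := (abs_le.1 (Real.exp_bound (x := u) h (n := 4) (by norm_num))).2
  have h3 := (abs_le.1 (Real.exp_bound (x := -u) (by rwa [abs_neg]) (n := 4) (by norm_num))).2
  rw [abs_neg, e1] at h3
  rw [e1] at h2
  norm_num [Finset.sum_range_succ, Nat.factorial] at h2 h3
  have key : Real.cosh u ≤ 1 + u^2/2 + u^4/16 := by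
    rw [Real.cosh_eq]; nlinarith [sq_nonneg u, sq_nonneg (u^2)]
  have e2 : (1 + u^2/4)^2 ≤ Real.exp (u^2/2) := by
    have h4 : u^2/2 = u^2/4 + u^2/4 := by ring
    rw [h4, Real.exp_add]
    have h5 := Real.add_one_le_exp (u^2/4)
    nlinarith [Real.exp_pos (u^2/4)]
  nlinarith [sq_nonneg u, sq_nonneg (u^2)]

lemma aux_gamma_num : Real.exp (-2 + Real.eulerMascheroniConstant) ≤ 0.2453 := by
  have h1 : Real.eulerMascheroniConstant < Real.eulerMascheroniSeq' 32 :=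
    Real.eulerMascheroniConstant_lt_eulerMascheroniSeq' 32
  have h2 : Real.eulerMascheroniSeq' 32 = (harmonic 32 : ℝ) - Real.log 32 := by
    rw [Real.eulerMascheroniSeq']; norm_num
  have hharmq : (harmonic 32 : ℚ) ≤ 4.0585 := by
    norm_num [harmonic, Finset.sum_range_succ]
  have hharm : (harmonic 32 : ℝ) ≤ 4.0585 := by
    have := (Rat.cast_le (K := ℝ)).2 hharmq
    simpa using this
  have hg : Real.eulerMascheroniConstant ≤ (4.0585:ℝ) - Real.log 32 := by
    rw [h2] at h1; linarith
  have h6 : Real.exp (-2 + Real.eulerMascheroniConstant) ≤ Real.exp (2.0585 - Real.log 32) :=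
    Real.exp_le_exp.2 (by linarith)
  have h7 : Real.exp (2.0585 - Real.log 32) = Real.exp 2.0585 / 32 := by
    rw [Real.exp_sub, Real.exp_log (by norm_num)]
  have e10 : Real.exp (0.0585:ℝ) ≤ 1/0.9415 := by
    have h5 := Real.add_one_le_exp (-0.0585:ℝ)
    have h51 : (0.9415:ℝ) ≤ Real.exp (-0.0585) := by linarith
    rw [Real.exp_neg] at h51
    have hp := Real.exp_pos (0.0585:ℝ)
    have := mul_le_mul_of_nonneg_left h51 hp.le
    rw [mul_inv_cancel₀ hp.ne'] at this
    nlinarith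
  have e9 : Real.exp (2.0585:ℝ) = Real.exp 1 * Real.exp 1 * Real.exp 0.0585 := by
    rw [← Real.exp_add, ← Real.exp_add]; norm_num
  have e3 := Real.exp_one_lt_d9
  have h8 : Real.exp (2.0585:ℝ) ≤ 7.849 := by
    rw [e9]; nlinarith [Real.exp_pos (1:ℝ), Real.exp_pos (0.0585:ℝ)]
  rw [h7] at h6; linarith

lemma aux_threshold : (0.509:ℝ) ≤ 1 - 2 * Real.exp (-2 + Real.eulerMascheroniConstant) := by
  have := aux_gamma_num; linarith

section Rad
variable {Ω : Type*} [MeasurableSpace Ω] {P : Measure Ω} [IsProbabilityMeasure P] {r : ℕ → Ω → ℝ}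


variable {Ω : Type*} [MeasurableSpace Ω] {P : Measure Ω} [IsProbabilityMeasure P] {r : ℕ → Ω → ℝ}

lemma rad_ae_pm_s9 (hr : IsRademacherSeq P r) (k : ℕ) : ∀ᵐ ω ∂P, r k ω = 1 ∨ r k ω = -1 := by
  have hA : MeasurableSet {ω | r k ω = 1} := hr.1 k (measurableSet_singleton 1)
  have hB : MeasurableSet {ω | r k ω = -1} := hr.1 k (measurableSet_singleton (-1))
  have hd : Disjoint {ω | r k ω = 1} {ω | r k ω = -1} := by
    rw [Set.disjoint_left]; intro ω h1 h2
    simp only [Set.mem_setOf_eq] at h1 h2; rw [h1] at h2; norm_num at h2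
  have hu : P ({ω | r k ω = 1} ∪ {ω | r k ω = -1}) = 1 := by
    rw [measure_union hd hB, (hr.2.2 k).1, (hr.2.2 k).2, ENNReal.div_add_div_same,
      one_add_one_eq_two]
    exact ENNReal.div_self (two_ne_zero) (ENNReal.ofNat_ne_top)
  rw [ae_iff]
  have e : {ω | ¬(r k ω = 1 ∨ r k ω = -1)} = ({ω | r k ω = 1} ∪ {ω | r k ω = -1})ᶜ := by
    ext ω; simp [not_or]
  rw [e]
  exact (prob_compl_eq_zero_iff (hA.union hB)).2 hu


lemma rad_pm_compl_null (hr : IsRademacherSeq P r) (j : ℕ) :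
    P ({ω | r j ω = 1} ∪ {ω | r j ω = -1})ᶜ = 0 := by
  have h := rad_ae_pm_s9 hr j
  rw [ae_iff] at h
  have e : ({ω | r j ω = 1} ∪ {ω | r j ω = -1})ᶜ = {ω | ¬(r j ω = 1 ∨ r j ω = -1)} := by
    ext ω; simp [not_or]
  rw [e]
  exact h

lemma rad_integral_comp (hr : IsRademacherSeq P r) (k : ℕ) (h : ℝ → ℝ) :
    ∫ ω, h (r k ω) ∂P = (h 1 + h (-1))/2 := by
  have hA : MeasurableSet {ω | r k ω = 1} := hr.1 k (measurableSet_singleton 1)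
  have hB : MeasurableSet {ω | r k ω = -1} := hr.1 k (measurableSet_singleton (-1))
  have hgae : (fun ω => h (r k ω)) =ᵐ[P]
      (fun ω => {ω | r k ω = 1}.indicator (fun _ => h 1) ω
        + {ω | r k ω = -1}.indicator (fun _ => h (-1)) ω) := by
    filter_upwards [rad_ae_pm_s9 hr k] with ω hω
    rcases hω with h1 | h1
    · rw [Set.indicator_of_mem (by simp only [Set.mem_setOf_eq, h1] : ω ∈ {ω | r k ω = 1}),
        Set.indicator_of_notMem (by simp only [Set.mem_setOf_eq, h1]; norm_num : ω ∉ {ω | r k ω = -1}), h1, add_zero]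
    · rw [Set.indicator_of_notMem (by simp only [Set.mem_setOf_eq, h1]; norm_num : ω ∉ {ω | r k ω = 1}),
        Set.indicator_of_mem (by simp only [Set.mem_setOf_eq, h1] : ω ∈ {ω | r k ω = -1}), h1, zero_add]
  rw [integral_congr_ae hgae, integral_add ((integrable_const (h 1)).indicator hA)
    ((integrable_const (h (-1))).indicator hB), integral_indicator_const _ hA,
    integral_indicator_const _ hB, measureReal_def, measureReal_def, (hr.2.2 k).1, (hr.2.2 k).2]
  simp [ENNReal.toReal_div]
  ring

lemma int_of_ae_bdd {f : Ω → ℝ} (hf : AEStronglyMeasurable f P) {C : ℝ}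
    (h : ∀ᵐ ω ∂P, |f ω| ≤ C) : Integrable f P :=
  (integrable_const C).mono' hf (by simpa [Real.norm_eq_abs] using h)

variable (x : ℕ → ℝ)

lemma rad_f_meas (hr : IsRademacherSeq P r) (k : ℕ) :
    Measurable (fun ω => r k ω * x k) := (hr.1 k).mul_const _

lemma rad_f_indep (hr : IsRademacherSeq P r) :
    iIndepFun (fun k ω => r k ω * x k) P :=
  hr.2.1.comp (fun k y => y * x k) (fun k => measurable_mul_const _)

lemma rad_S_meas (hr : IsRademacherSeq P r) (N : ℕ) :
    Measurable (fun ω => ∑ k ∈ Finset.range N, r k ω * x k) := by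
  exact Finset.measurable_sum _ (fun k _ => rad_f_meas x hr k)

lemma rad_indep_S_f (hr : IsRademacherSeq P r) {F : Finset ℕ} {j : ℕ} (hj : j ∉ F) :
    IndepFun (fun ω => ∑ k ∈ F, r k ω * x k) (fun ω => r j ω * x j) P := by
  have := (rad_f_indep x hr).indepFun_finset_sum_of_notMem
    (fun k => rad_f_meas x hr k) hj
  convert this using 1
  ext ω; simp [Finset.sum_apply]

lemma rad_ae_absS (hr : IsRademacherSeq P r) (N : ℕ) :
    ∀ᵐ ω ∂P, |∑ k ∈ Finset.range N, r k ω * x k| ≤ ∑ k ∈ Finset.range N, |x k| := by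
  have := MeasureTheory.ae_all_iff.2 (rad_ae_pm_s9 hr)
  filter_upwards [this] with ω hω
  refine (Finset.abs_sum_le_sum_abs _ _).trans (le_of_eq ?_)
  apply Finset.sum_congr rfl
  intro k _
  rcases hω k with h1 | h1 <;> simp [abs_mul, h1]

lemma rad_integral_cos (hr : IsRademacherSeq P r) (s : ℝ) (N : ℕ) :
    ∫ ω, Real.cos (s * ∑ k ∈ Finset.range N, r k ω * x k) ∂P
      = ∏ k ∈ Finset.range N, Real.cos (s * x k) := by
  induction N with
  | zero => simp
  | succ N ih =>
    have hSm := rad_S_meas x hr N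
    have hfm := rad_f_meas x hr N
    have hIF := rad_indep_S_f x hr (Finset.notMem_range_self (n := N))
    have expand : ∀ ω, Real.cos (s * ∑ k ∈ Finset.range (N+1), r k ω * x k)
        = Real.cos (s * ∑ k ∈ Finset.range N, r k ω * x k) * Real.cos (s * (r N ω * x N))
          - Real.sin (s * ∑ k ∈ Finset.range N, r k ω * x k) * Real.sin (s * (r N ω * x N)) := by
      intro ω; rw [Finset.sum_range_succ, mul_add, Real.cos_add]
    simp only [expand]
    have m1 : Measurable fun y : ℝ => Real.cos (s * y) := (measurable_id.const_mul s).cos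
    have m2 : Measurable fun y : ℝ => Real.sin (s * y) := (measurable_id.const_mul s).sin
    have i1 : Integrable (fun ω => Real.cos (s * ∑ k ∈ Finset.range N, r k ω * x k)) P :=
      int_of_ae_bdd ((m1.comp hSm).aestronglyMeasurable)
        (Filter.Eventually.of_forall fun ω => Real.abs_cos_le_one _)
    have i2 : Integrable (fun ω => Real.cos (s * (r N ω * x N))) P :=
      int_of_ae_bdd ((m1.comp hfm).aestronglyMeasurable)
        (Filter.Eventually.of_forall fun ω => Real.abs_cos_le_one _)
    have i3 : Integrable (fun ω => Real.sin (s * ∑ k ∈ Finset.range N, r k ω * x k)) P :=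
      int_of_ae_bdd ((m2.comp hSm).aestronglyMeasurable)
        (Filter.Eventually.of_forall fun ω => Real.abs_sin_le_one _)
    have i4 : Integrable (fun ω => Real.sin (s * (r N ω * x N))) P :=
      int_of_ae_bdd ((m2.comp hfm).aestronglyMeasurable)
        (Filter.Eventually.of_forall fun ω => Real.abs_sin_le_one _)
    have hcc : (∫ ω, Real.cos (s * ∑ k ∈ Finset.range N, r k ω * x k)
          * Real.cos (s * (r N ω * x N)) ∂P)
        = (∫ ω, Real.cos (s * ∑ k ∈ Finset.range N, r k ω * x k) ∂P)
          * ∫ ω, Real.cos (s * (r N ω * x N)) ∂P :=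
      (hIF.comp m1 m1).integral_fun_mul_eq_mul_integral i1.aestronglyMeasurable i2.aestronglyMeasurable
    have hss : (∫ ω, Real.sin (s * ∑ k ∈ Finset.range N, r k ω * x k)
          * Real.sin (s * (r N ω * x N)) ∂P)
        = (∫ ω, Real.sin (s * ∑ k ∈ Finset.range N, r k ω * x k) ∂P)
          * ∫ ω, Real.sin (s * (r N ω * x N)) ∂P :=
      (hIF.comp m2 m2).integral_fun_mul_eq_mul_integral i3.aestronglyMeasurable i4.aestronglyMeasurable
    have hcos1 : ∫ ω, Real.cos (s * (r N ω * x N)) ∂P = Real.cos (s * x N) := by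
      rw [rad_integral_comp hr N (fun y => Real.cos (s * (y * x N)))]
      have e : s * (-1 * x N) = -(s * (1 * x N)) := by ring
      rw [e, Real.cos_neg]
      norm_num
    have hsin1 : ∫ ω, Real.sin (s * (r N ω * x N)) ∂P = 0 := by
      rw [rad_integral_comp hr N (fun y => Real.sin (s * (y * x N)))]
      have e : s * (-1 * x N) = -(s * (1 * x N)) := by ring
      rw [e, Real.sin_neg]
      norm_num
    have iA : Integrable (fun ω => Real.cos (s * ∑ k ∈ Finset.range N, r k ω * x k)
        * Real.cos (s * (r N ω * x N))) P :=
      int_of_ae_bdd ((m1.comp hSm).mul (m1.comp hfm)).aestronglyMeasurable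
        (Filter.Eventually.of_forall fun ω => by
          rw [abs_mul]
          exact mul_le_one₀ (Real.abs_cos_le_one _) (abs_nonneg _) (Real.abs_cos_le_one _))
    have iB : Integrable (fun ω => Real.sin (s * ∑ k ∈ Finset.range N, r k ω * x k)
        * Real.sin (s * (r N ω * x N))) P :=
      int_of_ae_bdd ((m2.comp hSm).mul (m2.comp hfm)).aestronglyMeasurable
        (Filter.Eventually.of_forall fun ω => by
          rw [abs_mul]
          exact mul_le_one₀ (Real.abs_sin_le_one _) (abs_nonneg _) (Real.abs_sin_le_one _))
    rw [integral_sub iA iB, hcc, hss, hcos1, hsin1, ih, Finset.prod_range_succ]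
    ring

lemma rad_integral_exp (hr : IsRademacherSeq P r) (t : ℝ) (N : ℕ) :
    ∫ ω, Real.exp (t * ∑ k ∈ Finset.range N, r k ω * x k) ∂P
      = ∏ k ∈ Finset.range N, Real.cosh (t * x k) := by
  induction N with
  | zero => simp
  | succ N ih =>
    have hSm := rad_S_meas x hr N
    have hfm := rad_f_meas x hr N
    have hIF := rad_indep_S_f x hr (Finset.notMem_range_self (n := N))
    have expand : ∀ ω, Real.exp (t * ∑ k ∈ Finset.range (N+1), r k ω * x k)
        = Real.exp (t * ∑ k ∈ Finset.range N, r k ω * x k) * Real.exp (t * (r N ω * x N)) := by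
      intro ω; rw [Finset.sum_range_succ, mul_add, Real.exp_add]
    simp only [expand]
    have m1 : Measurable fun y : ℝ => Real.exp (t * y) := (measurable_id.const_mul t).exp
    have i1 : Integrable (fun ω => Real.exp (t * ∑ k ∈ Finset.range N, r k ω * x k)) P := by
      refine int_of_ae_bdd ((m1.comp hSm).aestronglyMeasurable) (C := Real.exp (|t| * ∑ k ∈ Finset.range N, |x k|)) ?_
      filter_upwards [rad_ae_absS x hr N] with ω hω
      rw [abs_of_pos (Real.exp_pos _)]
      apply Real.exp_le_exp.2
      calc t * ∑ k ∈ Finset.range N, r k ω * x k ≤ |t * ∑ k ∈ Finset.range N, r k ω * x k| := le_abs_self _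
      _ = |t| * |∑ k ∈ Finset.range N, r k ω * x k| := abs_mul _ _
      _ ≤ |t| * ∑ k ∈ Finset.range N, |x k| := by
          exact mul_le_mul_of_nonneg_left hω (abs_nonneg t)
    have i2 : Integrable (fun ω => Real.exp (t * (r N ω * x N))) P := by
      refine int_of_ae_bdd ((m1.comp hfm).aestronglyMeasurable) (C := Real.exp (|t| * |x N|)) ?_
      filter_upwards [rad_ae_pm_s9 hr N] with ω hω
      rw [abs_of_pos (Real.exp_pos _)]
      apply Real.exp_le_exp.2
      calc t * (r N ω * x N) ≤ |t * (r N ω * x N)| := le_abs_self _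
      _ = |t| * |x N| := by rcases hω with h1 | h1 <;> simp [abs_mul, h1]
    have hcc : (∫ ω, Real.exp (t * ∑ k ∈ Finset.range N, r k ω * x k)
          * Real.exp (t * (r N ω * x N)) ∂P)
        = (∫ ω, Real.exp (t * ∑ k ∈ Finset.range N, r k ω * x k) ∂P)
          * ∫ ω, Real.exp (t * (r N ω * x N)) ∂P :=
      (hIF.comp m1 m1).integral_fun_mul_eq_mul_integral i1.aestronglyMeasurable i2.aestronglyMeasurable
    have hexp1 : ∫ ω, Real.exp (t * (r N ω * x N)) ∂P = Real.cosh (t * x N) := by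
      rw [rad_integral_comp hr N (fun y => Real.exp (t * (y * x N)))]
      rw [Real.cosh_eq]
      have e1 : t * (1 * x N) = t * x N := by ring
      have e2 : t * (-1 * x N) = -(t * x N) := by ring
      rw [e1, e2]
    rw [integral_congr_ae (Filter.EventuallyEq.refl _ _), hcc, hexp1, ih, Finset.prod_range_succ]





lemma rad_int_exp (hr : IsRademacherSeq P r) (t : ℝ) (N : ℕ) :
    Integrable (fun ω => Real.exp (t * ∑ k ∈ Finset.range N, r k ω * x k)) P := by
  have m1 : Measurable fun y : ℝ => Real.exp (t * y) := (measurable_id.const_mul t).exp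
  refine int_of_ae_bdd ((m1.comp (rad_S_meas x hr N)).aestronglyMeasurable)
    (C := Real.exp (|t| * ∑ k ∈ Finset.range N, |x k|)) ?_
  filter_upwards [rad_ae_absS x hr N] with ω hω
  rw [abs_of_pos (Real.exp_pos _)]
  apply Real.exp_le_exp.2
  calc t * ∑ k ∈ Finset.range N, r k ω * x k
      ≤ |t * ∑ k ∈ Finset.range N, r k ω * x k| := le_abs_self _
    _ = |t| * |∑ k ∈ Finset.range N, r k ω * x k| := abs_mul _ _
    _ ≤ |t| * ∑ k ∈ Finset.range N, |x k| := mul_le_mul_of_nonneg_left hω (abs_nonneg t)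

lemma rad_cosh_prod_le (hr : IsRademacherSeq P r) {b : ℝ} (hb : 0 < b)
    (hxb : ∀ N, ∑ k ∈ Finset.range N, (x k)^2 ≤ b^2) (N : ℕ) :
    ∏ k ∈ Finset.range N, Real.cosh ((1/b) * x k) ≤ Real.exp 1 := by
  have hxk : ∀ k, |x k| ≤ b := by
    intro k
    have h1 : (x k)^2 ≤ b^2 := by
      have := hxb (k+1)
      have h2 : (x k)^2 ≤ ∑ j ∈ Finset.range (k+1), (x j)^2 :=
        Finset.single_le_sum (fun j _ => sq_nonneg (x j)) (Finset.self_mem_range_succ k)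
      linarith
    nlinarith [abs_nonneg (x k), sq_abs (x k)]
  calc ∏ k ∈ Finset.range N, Real.cosh ((1/b) * x k)
      ≤ ∏ k ∈ Finset.range N, Real.exp (((1/b) * x k)^2/2) := by
        apply Finset.prod_le_prod (fun k _ => (Real.cosh_pos _).le)
        intro k _
        apply aux_cosh_le_exp
        rw [abs_mul, abs_of_pos (by positivity : (0:ℝ) < 1/b)]
        rw [div_mul_eq_mul_div, one_mul, div_le_one hb]
        exact hxk k
    _ = Real.exp (∑ k ∈ Finset.range N, ((1/b) * x k)^2/2) := by
        rw [Real.exp_sum]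
    _ ≤ Real.exp 1 := by
        apply Real.exp_le_exp.2
        have : ∑ k ∈ Finset.range N, ((1/b) * x k)^2/2
            = (∑ k ∈ Finset.range N, (x k)^2) / (2*b^2) := by
          rw [Finset.sum_div]
          apply Finset.sum_congr rfl
          intro k _; field_simp
        rw [this]
        rw [div_le_iff₀ (by positivity)]
        nlinarith [hxb N]

lemma rad_moment (hr : IsRademacherSeq P r) {b : ℝ} (hb : 0 < b)
    (hxb : ∀ N, ∑ k ∈ Finset.range N, (x k)^2 ≤ b^2) (m : ℕ) (N : ℕ) :
    ∫ ω, (∑ k ∈ Finset.range N, r k ω * x k)^(2*m) ∂P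
      ≤ 2 * (2*m).factorial * Real.exp 1 * b^(2*m) := by
  have key : ∀ y : ℝ, y^(2*m) ≤ (2*m).factorial * b^(2*m)
      * (Real.exp ((1/b) * y) + Real.exp ((-(1/b)) * y)) := by
    intro y
    have h1 : (|y|/b)^(2*m) / (2*m).factorial ≤ Real.exp (|y|/b) :=
      Real.pow_div_factorial_le_exp _ (by positivity) _
    have h2 : Real.exp (|y|/b) ≤ Real.exp ((1/b) * y) + Real.exp ((-(1/b)) * y) := by
      rcases abs_cases y with ⟨h3, _⟩ | ⟨h3, _⟩
      · rw [h3]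
        have e : (1/b) * y = y/b := by ring
        rw [← e]
        nlinarith [Real.exp_pos ((-(1/b)) * y)]
      · rw [h3]
        have e : (-(1/b)) * y = -y/b := by ring
        rw [← e]
        nlinarith [Real.exp_pos ((1/b) * y)]
    have h4 : y^(2*m) = |y|^(2*m) := ((even_two_mul m).pow_abs y).symm
    have h5 : (|y|/b)^(2*m) = |y|^(2*m) / b^(2*m) := div_pow _ _ _
    rw [h4]
    have hbp : (0:ℝ) < b^(2*m) := by positivity
    have hfp : (0:ℝ) < ((2*m).factorial : ℝ) := by positivity
    rw [h5] at h1
    have h6 : |y|^(2*m) ≤ ((2*m).factorial : ℝ) * b^(2*m) * Real.exp (|y|/b) := by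
      rw [div_div] at h1
      calc |y|^(2*m) = (|y|^(2*m) / (b^(2*m) * (2*m).factorial)) * (b^(2*m) * (2*m).factorial) := by
            field_simp
        _ ≤ Real.exp (|y|/b) * (b^(2*m) * (2*m).factorial) := by
            apply mul_le_mul_of_nonneg_right h1 (by positivity)
        _ = ((2*m).factorial : ℝ) * b^(2*m) * Real.exp (|y|/b) := by ring
    calc |y|^(2*m) ≤ ((2*m).factorial : ℝ) * b^(2*m) * Real.exp (|y|/b) := h6
      _ ≤ _ := by
          apply mul_le_mul_of_nonneg_left h2 (by positivity)
  have iL : Integrable (fun ω => (∑ k ∈ Finset.range N, r k ω * x k)^(2*m)) P := by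
    refine int_of_ae_bdd (((rad_S_meas x hr N).pow_const _).aestronglyMeasurable)
      (C := (∑ k ∈ Finset.range N, |x k|)^(2*m)) ?_
    filter_upwards [rad_ae_absS x hr N] with ω hω
    rw [abs_pow]
    exact pow_le_pow_left₀ (abs_nonneg _) hω _
  have iR1 := rad_int_exp x hr (1/b) N
  have iR2 := rad_int_exp x hr (-(1/b)) N
  have step : ∫ ω, (∑ k ∈ Finset.range N, r k ω * x k)^(2*m) ∂P
      ≤ ∫ ω, ((2*m).factorial : ℝ) * b^(2*m)
          * (Real.exp ((1/b) * ∑ k ∈ Finset.range N, r k ω * x k)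
            + Real.exp ((-(1/b)) * ∑ k ∈ Finset.range N, r k ω * x k)) ∂P := by
    apply integral_mono iL (((iR1.add iR2).const_mul _)) (fun ω => key _)
  refine step.trans ?_
  rw [MeasureTheory.integral_const_mul, integral_add iR1 iR2, rad_integral_exp x hr (1/b) N,
    rad_integral_exp x hr (-(1/b)) N]
  have e1 : ∀ k, Real.cosh ((-(1/b)) * x k) = Real.cosh ((1/b) * x k) := by
    intro k
    rw [show (-(1/b)) * x k = -((1/b) * x k) by ring, Real.cosh_neg]
  simp only [e1]
  have hprod := rad_cosh_prod_le x hr hb hxb N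
  have hprodpos : (0:ℝ) < ∏ k ∈ Finset.range N, Real.cosh ((1/b) * x k) :=
    Finset.prod_pos (fun k _ => Real.cosh_pos _)
  have hbp : (0:ℝ) < b^(2*m) := by positivity
  have hfp : (0:ℝ) < ((2*m).factorial : ℝ) := by positivity
  have goal2 : ((2*m).factorial : ℝ) * b^(2*m)
      * (∏ k ∈ Finset.range N, Real.cosh ((1/b) * x k) + ∏ k ∈ Finset.range N, Real.cosh ((1/b) * x k))
      ≤ 2 * (2*m).factorial * Real.exp 1 * b^(2*m) := by
    have h9 : (∏ k ∈ Finset.range N, Real.cosh ((1/b) * x k))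
        + ∏ k ∈ Finset.range N, Real.cosh ((1/b) * x k) ≤ 2 * Real.exp 1 := by linarith
    calc ((2*m).factorial : ℝ) * b^(2*m) * (∏ k ∈ Finset.range N, Real.cosh ((1/b) * x k) + ∏ k ∈ Finset.range N, Real.cosh ((1/b) * x k))
        ≤ ((2*m).factorial : ℝ) * b^(2*m) * (2 * Real.exp 1) :=
          mul_le_mul_of_nonneg_left h9 (by positivity)
      _ = 2 * (2*m).factorial * Real.exp 1 * b^(2*m) := by ring
  linarith





lemma aux_cos_num {u : ℝ} (h : |u| ≤ 0.04) : (0.9991:ℝ) ≤ Real.cos u := by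
  have h1 := (abs_le.1 (Real.cos_bound (h.trans (by norm_num)))).1
  have e1 : |u|^4 = u^4 := by rw [← abs_pow]; exact abs_of_nonneg (by positivity)
  have h2 : u^2 ≤ 0.0016 := by nlinarith [sq_abs u, abs_nonneg u]
  have h3 : u^4 ≤ 0.0016^2 := by nlinarith [sq_nonneg u, sq_nonneg (u^2)]
  rw [e1] at h1
  nlinarith

lemma aux_exp8 : Real.exp (-(8:ℝ)) ≤ 0.0005 := by
  have h1 : (2000:ℝ) ≤ Real.exp 8 := by
    have e : Real.exp (8:ℝ) = (Real.exp 1)^(8:ℕ) := by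
      rw [← Real.exp_nat_mul]; norm_num
    have h2 := Real.exp_one_gt_d9
    rw [e]
    calc (2000:ℝ) ≤ 2.7^(8:ℕ) := by norm_num
      _ ≤ (Real.exp 1)^(8:ℕ) := by
          apply pow_le_pow_left₀ (by norm_num) (by linarith)
  rw [Real.exp_neg]
  rw [inv_le_comm₀ (Real.exp_pos _) (by norm_num)]
  linarith

lemma rad_tail_finite (hr : IsRademacherSeq P r) (N : ℕ)
    (hσ : 0 < Real.sqrt (∑ k ∈ Finset.range N, (x k)^2)) :
    P {ω | |∑ k ∈ Finset.range N, r k ω * x k|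
        < Real.sqrt (∑ k ∈ Finset.range N, (x k)^2) / 100}
      ≤ ENNReal.ofReal 0.5006 := by
  set σ := Real.sqrt (∑ k ∈ Finset.range N, (x k)^2) with hσdef
  have hσ2 : σ^2 = ∑ k ∈ Finset.range N, (x k)^2 :=
    Real.sq_sqrt (Finset.sum_nonneg fun k _ => sq_nonneg (x k))
  have hSm := rad_S_meas x hr N
  have hD : MeasurableSet {ω | |∑ k ∈ Finset.range N, r k ω * x k| < σ/100} := by
    exact hSm.abs measurableSet_Iio
  set D := {ω | |∑ k ∈ Finset.range N, r k ω * x k| < σ/100} with hDdef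
  by_cases hcase : ∀ j ∈ Finset.range N, |x j| ≤ σ/8
  · -- Case B : all coordinates small; Fourier argument
    set s : ℝ := 4/σ with hsdef
    have hs : 0 < s := by positivity
    have hb2 : ∏ k ∈ Finset.range N, Real.cos (s * x k) ≤ Real.exp (-(8:ℝ)) := by
      have hsmall : ∀ k ∈ Finset.range N, |s * x k| ≤ 1/2 := by
        intro k hk
        rw [abs_mul, abs_of_pos hs]
        calc s * |x k| ≤ s * (σ/8) := mul_le_mul_of_nonneg_left (hcase k hk) hs.le
          _ = 1/2 := by rw [hsdef]; field_simp; norm_num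
      calc ∏ k ∈ Finset.range N, Real.cos (s * x k)
          ≤ ∏ k ∈ Finset.range N, Real.exp (-((s * x k)^2/2)) := by
            apply Finset.prod_le_prod
            · intro k hk
              apply Real.cos_nonneg_of_mem_Icc
              constructor
              · have := (abs_le.1 (hsmall k hk)).1
                have hpi := Real.pi_gt_three
                linarith
              · have := (abs_le.1 (hsmall k hk)).2
                have hpi := Real.pi_gt_three
                linarith
            · intro k hk; exact aux_cos_le_exp (hsmall k hk)
        _ = Real.exp (∑ k ∈ Finset.range N, -((s * x k)^2/2)) := by rw [Real.exp_sum]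
        _ = Real.exp (-(8:ℝ)) := by
            congr 1
            have : ∑ k ∈ Finset.range N, -((s * x k)^2/2)
                = -(s^2/2) * ∑ k ∈ Finset.range N, (x k)^2 := by
              rw [Finset.mul_sum]; apply Finset.sum_congr rfl; intro k _; ring
            rw [this, ← hσ2, hsdef]
            field_simp
            ring
    have hb1 := rad_integral_cos x hr s N
    -- lower bound for the integral
    have hcos04 : ∀ ω ∈ D, (0.9991:ℝ) ≤ Real.cos (s * ∑ k ∈ Finset.range N, r k ω * x k) := by
      intro ω hω
      apply aux_cos_num
      rw [abs_mul, abs_of_pos hs]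
      have hω' : |∑ k ∈ Finset.range N, r k ω * x k| < σ/100 := hω
      calc s * |∑ k ∈ Finset.range N, r k ω * x k| ≤ s * (σ/100) :=
            mul_le_mul_of_nonneg_left hω'.le hs.le
        _ = 0.04 := by rw [hsdef]; field_simp; norm_num
    have m1 : Measurable fun y : ℝ => Real.cos (s * y) := (measurable_id.const_mul s).cos
    have i1 : Integrable (fun ω => Real.cos (s * ∑ k ∈ Finset.range N, r k ω * x k)) P :=
      int_of_ae_bdd ((m1.comp hSm).aestronglyMeasurable)
        (Filter.Eventually.of_forall fun ω => Real.abs_cos_le_one _)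
    have hsplit : ∫ ω, Real.cos (s * ∑ k ∈ Finset.range N, r k ω * x k) ∂P
        = (∫ ω in D, Real.cos (s * ∑ k ∈ Finset.range N, r k ω * x k) ∂P)
          + ∫ ω in Dᶜ, Real.cos (s * ∑ k ∈ Finset.range N, r k ω * x k) ∂P :=
      (integral_add_compl hD i1).symm
    set d : ℝ := (P D).toReal with hddef
    have hd1 : (P Dᶜ).toReal = 1 - d := by
      rw [measure_compl hD (measure_ne_top _ _), measure_univ]
      rw [ENNReal.toReal_sub_of_le prob_le_one ENNReal.one_ne_top]
      simp
      exact hddef.symm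
    have hIl : (0.9991:ℝ) * d ≤ ∫ ω in D, Real.cos (s * ∑ k ∈ Finset.range N, r k ω * x k) ∂P := by
      have := MeasureTheory.setIntegral_mono_on (integrableOn_const (measure_lt_top P D).ne)
        (i1.integrableOn) hD (fun ω hω => hcos04 ω hω)
      rwa [setIntegral_const, smul_eq_mul, mul_comm, measureReal_def] at this
    have hIr : -(1-d) ≤ ∫ ω in Dᶜ, Real.cos (s * ∑ k ∈ Finset.range N, r k ω * x k) ∂P := by
      have := MeasureTheory.setIntegral_mono_on (integrableOn_const (measure_lt_top P Dᶜ).ne)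
        (i1.integrableOn) hD.compl
        (fun ω _ => neg_one_le_cos (s * ∑ k ∈ Finset.range N, r k ω * x k))
      rw [setIntegral_const, smul_eq_mul, measureReal_def, hd1] at this
      linarith
    have hd9 : (0.9991:ℝ) * d - (1 - d) ≤ Real.exp (-(8:ℝ)) := by
      rw [hb1] at hsplit
      rw [hsplit] at hb2
      linarith
    have hfinal : d ≤ 0.5006 := by
      have := aux_exp8
      nlinarith
    rw [ENNReal.le_ofReal_iff_toReal_le (measure_ne_top _ _) (by norm_num)]
    exact hfinal
  · -- Case A : one large coordinate; conditioning argument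
    push_neg at hcase
    obtain ⟨j, hjN, hj⟩ := hcase
    have hxj0 : x j ≠ 0 := by
      intro h; rw [h] at hj; simp at hj; nlinarith
    set F := (Finset.range N).erase j with hFdef
    set S' : Ω → ℝ := fun ω => ∑ k ∈ F, r k ω * x k with hS'def
    have hsum : ∀ ω, S' ω + r j ω * x j = ∑ k ∈ Finset.range N, r k ω * x k := by
      intro ω
      exact Finset.sum_erase_add (Finset.range N) _ hjN
    have hIF : IndepFun S' (fun ω => r j ω * x j) P :=
      rad_indep_S_f x hr (Finset.notMem_erase j _)
    set t : ℝ := σ/100 with htdef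
    have htpos : 0 < t := by positivity
    have htxj : t < |x j| := by
      have : σ/100 < σ/8 := by
        apply div_lt_div_of_pos_left hσ <;> norm_num
      linarith
    set I₁ : Set ℝ := Set.Ioo (-(x j) - t) (-(x j) + t) with hI1def
    set I₂ : Set ℝ := Set.Ioo (x j - t) (x j + t) with hI2def
    have hAeq : (fun ω => r j ω * x j) ⁻¹' {x j} = {ω | r j ω = 1} := by
      ext ω
      simp only [Set.mem_preimage, Set.mem_singleton_iff, Set.mem_setOf_eq]
      constructor
      · intro h
        have : r j ω * x j = 1 * x j := by rw [h, one_mul]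
        exact mul_right_cancel₀ hxj0 this
      · intro h; rw [h, one_mul]
    have hBeq : (fun ω => r j ω * x j) ⁻¹' {-(x j)} = {ω | r j ω = -1} := by
      ext ω
      simp only [Set.mem_preimage, Set.mem_singleton_iff, Set.mem_setOf_eq]
      constructor
      · intro h
        have : r j ω * x j = (-1) * x j := by rw [h]; ring
        exact mul_right_cancel₀ hxj0 this
      · intro h; rw [h]; ring
    have hDA : D ∩ ((fun ω => r j ω * x j) ⁻¹' {x j})
        = (S' ⁻¹' I₁) ∩ ((fun ω => r j ω * x j) ⁻¹' {x j}) := by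
      ext ω
      simp only [Set.mem_inter_iff, Set.mem_preimage, Set.mem_singleton_iff, hDdef,
        Set.mem_setOf_eq, hI1def, Set.mem_Ioo]
      constructor
      · rintro ⟨h1, h2⟩
        refine ⟨?_, h2⟩
        rw [← hsum ω, h2] at h1
        rw [abs_lt] at h1
        constructor <;> linarith [h1.1, h1.2]
      · rintro ⟨h1, h2⟩
        refine ⟨?_, h2⟩
        rw [← hsum ω, h2, abs_lt]
        constructor <;> linarith [h1.1, h1.2]
    have hDB : D ∩ ((fun ω => r j ω * x j) ⁻¹' {-(x j)})
        = (S' ⁻¹' I₂) ∩ ((fun ω => r j ω * x j) ⁻¹' {-(x j)}) := by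
      ext ω
      simp only [Set.mem_inter_iff, Set.mem_preimage, Set.mem_singleton_iff, hDdef,
        Set.mem_setOf_eq, hI2def, Set.mem_Ioo]
      constructor
      · rintro ⟨h1, h2⟩
        refine ⟨?_, h2⟩
        rw [← hsum ω, h2] at h1
        rw [abs_lt] at h1
        constructor <;> linarith [h1.1, h1.2]
      · rintro ⟨h1, h2⟩
        refine ⟨?_, h2⟩
        rw [← hsum ω, h2, abs_lt]
        constructor <;> linarith [h1.1, h1.2]
    have hP1 : P ((S' ⁻¹' I₁) ∩ ((fun ω => r j ω * x j) ⁻¹' {x j}))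
        = P (S' ⁻¹' I₁) * (1/2) := by
      rw [hIF.measure_inter_preimage_eq_mul I₁ {x j} measurableSet_Ioo
        (measurableSet_singleton _), hAeq, (hr.2.2 j).1]
    have hP2 : P ((S' ⁻¹' I₂) ∩ ((fun ω => r j ω * x j) ⁻¹' {-(x j)}))
        = P (S' ⁻¹' I₂) * (1/2) := by
      rw [hIF.measure_inter_preimage_eq_mul I₂ {-(x j)} measurableSet_Ioo
        (measurableSet_singleton _), hBeq, (hr.2.2 j).2]
    have hdisj : Disjoint I₁ I₂ := by
      rw [Set.disjoint_left]
      intro y h1 h2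
      rw [hI1def, Set.mem_Ioo] at h1
      rw [hI2def, Set.mem_Ioo] at h2
      rcases abs_cases (x j) with ⟨he, _⟩ | ⟨he, _⟩ <;> rw [he] at htxj <;>
        [skip; skip] <;> linarith [h1.1, h1.2, h2.1, h2.2]
    have hS'm : Measurable S' := Finset.measurable_sum _ (fun k _ => (hr.1 k).mul_const _)
    have hsumI : P (S' ⁻¹' I₁) + P (S' ⁻¹' I₂) ≤ 1 := by
      rw [← measure_union (hdisj.preimage S') (hS'm measurableSet_Ioo)]
      exact prob_le_one
    have hcover : D ⊆ ((S' ⁻¹' I₁) ∩ ((fun ω => r j ω * x j) ⁻¹' {x j}))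
        ∪ (((S' ⁻¹' I₂) ∩ ((fun ω => r j ω * x j) ⁻¹' {-(x j)}))
          ∪ ({ω | r j ω = 1} ∪ {ω | r j ω = -1})ᶜ) := by
      intro ω hω
      by_cases h1 : r j ω = 1
      · left
        rw [← hDA]
        exact ⟨hω, by simp [Set.mem_preimage, h1]⟩
      · by_cases h2 : r j ω = -1
        · right; left
          rw [← hDB]
          refine ⟨hω, ?_⟩
          simp only [Set.mem_preimage, Set.mem_singleton_iff, h2]
          ring
        · right; right
          simp only [Set.mem_compl_iff, Set.mem_union, Set.mem_setOf_eq]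
          tauto
    calc P D ≤ P (((S' ⁻¹' I₁) ∩ ((fun ω => r j ω * x j) ⁻¹' {x j}))
        ∪ (((S' ⁻¹' I₂) ∩ ((fun ω => r j ω * x j) ⁻¹' {-(x j)}))
          ∪ ({ω | r j ω = 1} ∪ {ω | r j ω = -1})ᶜ)) := measure_mono hcover
      _ ≤ P ((S' ⁻¹' I₁) ∩ ((fun ω => r j ω * x j) ⁻¹' {x j}))
          + (P ((S' ⁻¹' I₂) ∩ ((fun ω => r j ω * x j) ⁻¹' {-(x j)}))
            + P (({ω | r j ω = 1} ∪ {ω | r j ω = -1})ᶜ)) :=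
        (measure_union_le _ _).trans (add_le_add_right (measure_union_le _ _) _)
      _ = P (S' ⁻¹' I₁) * (1/2) + P (S' ⁻¹' I₂) * (1/2) := by
          rw [hP1, hP2, rad_pm_compl_null hr j, add_zero]
      _ = (P (S' ⁻¹' I₁) + P (S' ⁻¹' I₂)) * (1/2) := by rw [add_mul]
      _ ≤ 1 * (1/2) := by
          exact mul_le_mul_left hsumI _
      _ ≤ ENNReal.ofReal 0.5006 := by
          rw [one_mul]
          rw [ENNReal.le_ofReal_iff_toReal_le (by simp) (by norm_num)]
          simp
          norm_num




lemma rad_tail_limit (hr : IsRademacherSeq P r) (ξ : Ω → ℝ)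
    (hsum : Summable (fun n => (x n)^2))
    (ha : ∀ᵐ ω ∂P, HasSum (fun n => r n ω * x n) (ξ ω))
    (hT : 0 < ∑' n, (x n)^2) :
    P {ω | |ξ ω| < Real.sqrt (∑' n, (x n)^2) / 200} ≤ ENNReal.ofReal 0.5006 := by
  set T := ∑' n, (x n)^2 with hTdef
  set σ := Real.sqrt T with hσdef
  have hσpos : 0 < σ := Real.sqrt_pos.2 hT
  have hσ2 : σ^2 = T := Real.sq_sqrt hT.le
  set pN : ℕ → ℝ := fun N => ∑ k ∈ Finset.range N, (x k)^2 with hpNdef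
  have htend : Tendsto pN atTop (nhds T) := hsum.hasSum.tendsto_sum_nat
  obtain ⟨N₀, hN₀⟩ := (Filter.eventually_atTop).1 (htend.eventually (lt_mem_nhds
    (show T/2 < T by linarith)))
  -- for N ≥ N₀, σ_N ≥ 0.7 σ > 0
  have hσN : ∀ N ≥ N₀, 0.7 * σ ≤ Real.sqrt (pN N) := by
    intro N hN
    have h1 : T/2 < pN N := hN₀ N hN
    have h2 : (0.7*σ)^2 ≤ pN N := by nlinarith
    calc (0.7:ℝ)*σ = Real.sqrt ((0.7*σ)^2) := by
          rw [Real.sqrt_sq (by positivity)]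
      _ ≤ Real.sqrt (pN N) := Real.sqrt_le_sqrt h2
  set A : ℕ → Set Ω := fun N => {ω | |∑ k ∈ Finset.range N, r k ω * x k|
      < Real.sqrt (pN N) / 100} with hAdef
  have hAbound : ∀ N ≥ N₀, P (A N) ≤ ENNReal.ofReal 0.5006 := by
    intro N hN
    apply rad_tail_finite x hr N
    calc (0:ℝ) < 0.7 * σ := by positivity
      _ ≤ _ := hσN N hN
  set G : ℕ → Set Ω := fun M => ⋂ i : ℕ, A (N₀ + M + i) with hGdef
  have hGmono : Monotone G := by
    intro M M' hMM'
    intro ω hω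
    simp only [hGdef, Set.mem_iInter] at hω ⊢
    intro i
    have : N₀ + M' + i = N₀ + M + (M' - M + i) := by omega
    rw [this]
    exact hω _
  have hsub : ∀ᵐ ω ∂P, ω ∈ {ω | |ξ ω| < σ / 200} → ω ∈ ⋃ M, G M := by
    filter_upwards [ha] with ω hω hmem
    have htendS : Tendsto (fun N => ∑ k ∈ Finset.range N, r k ω * x k) atTop (nhds (ξ ω)) :=
      hω.tendsto_sum_nat
    have hev : ∀ᶠ N in atTop, |∑ k ∈ Finset.range N, r k ω * x k - ξ ω| < σ/1000 := by
      have := Metric.tendsto_atTop.1 htendS (σ/1000) (by positivity)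
      obtain ⟨M₁, hM₁⟩ := this
      rw [Filter.eventually_atTop]
      exact ⟨M₁, fun N hN => by simpa [Real.dist_eq] using hM₁ N hN⟩
    obtain ⟨M₁, hM₁⟩ := Filter.eventually_atTop.1 hev
    refine Set.mem_iUnion.2 ⟨M₁, ?_⟩
    simp only [hGdef, Set.mem_iInter, hAdef, Set.mem_setOf_eq]
    intro i
    have hN : N₀ + M₁ + i ≥ M₁ := by omega
    have h1 := hM₁ _ hN
    have h2 : |ξ ω| < σ/200 := hmem
    have h3 : |∑ k ∈ Finset.range (N₀ + M₁ + i), r k ω * x k| < σ/200 + σ/1000 := by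
      have := abs_sub_abs_le_abs_sub (∑ k ∈ Finset.range (N₀ + M₁ + i), r k ω * x k) (ξ ω)
      linarith
    have h4 := hσN (N₀ + M₁ + i) (by omega)
    linarith
  have hcalc : P {ω | |ξ ω| < σ / 200} ≤ P (⋃ M, G M) := measure_mono_ae hsub
  refine hcalc.trans ?_
  rw [hGmono.directed_le.measure_iUnion]
  apply iSup_le
  intro M
  calc P (G M) ≤ P (A (N₀ + M + 0)) := measure_mono (Set.iInter_subset _ 0)
    _ ≤ ENNReal.ofReal 0.5006 := hAbound _ (by omega)

lemma rad_eLpNorm_xi (hr : IsRademacherSeq P r) (ξ : Ω → ℝ)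
    (ha : ∀ᵐ ω ∂P, HasSum (fun n => r n ω * x n) (ξ ω))
    {b : ℝ} (hb : 0 < b)
    (hxb : ∀ N, ∑ k ∈ Finset.range N, (x k)^2 ≤ b^2) (m : ℕ) (hm : 0 < m) :
    eLpNorm ξ ((2*m : ℕ) : ℝ≥0∞) P
      ≤ ENNReal.ofReal ((2 * (2*m).factorial * Real.exp 1)^((1:ℝ)/(2*m)) * b) := by
  have hten : ∀ᵐ ω ∂P, Tendsto (fun N => ∑ k ∈ Finset.range N, r k ω * x k) atTop (nhds (ξ ω)) := by
    filter_upwards [ha] with ω hω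
    exact hω.tendsto_sum_nat
  have haesm : AEStronglyMeasurable ξ P :=
    aestronglyMeasurable_of_tendsto_ae atTop
      (fun N => (rad_S_meas x hr N).aestronglyMeasurable) hten
  have hp0 : ((2*m : ℕ) : ℝ≥0∞) ≠ 0 := by
    simp only [ne_eq, Nat.cast_eq_zero]
    omega
  have hpt : ((2*m : ℕ) : ℝ≥0∞) ≠ ∞ := ENNReal.natCast_ne_top _
  rw [eLpNorm_eq_lintegral_rpow_enorm_toReal hp0 hpt]
  simp only [enorm_eq_nnnorm]
  have htoReal : ((2*m : ℕ) : ℝ≥0∞).toReal = ((2*m : ℕ) : ℝ) := by simp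
  rw [htoReal]
  set c : ℝ := ((2*m : ℕ) : ℝ) with hcdef
  have hcpos : (0:ℝ) < c := by positivity
  -- pointwise identity : (‖y‖₊ : ℝ≥0∞)^c = ofReal (y^(2m))
  have hpoint : ∀ y : ℝ, ((‖y‖₊ : ℝ≥0∞)) ^ c = ENNReal.ofReal (y^(2*m)) := by
    intro y
    rw [← enorm_eq_nnnorm, Real.enorm_eq_ofReal_abs, ENNReal.ofReal_rpow_of_nonneg (abs_nonneg y) hcpos.le]
    congr 1
    rw [hcdef, Real.rpow_natCast]
    exact (even_two_mul m).pow_abs y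
  -- a.e. liminf identity
  have hliminf : ∀ᵐ ω ∂P, ((‖ξ ω‖₊ : ℝ≥0∞)) ^ c
      = liminf (fun N => ((‖∑ k ∈ Finset.range N, r k ω * x k‖₊ : ℝ≥0∞)) ^ c) atTop := by
    filter_upwards [hten] with ω hω
    have : Tendsto (fun N => ((‖∑ k ∈ Finset.range N, r k ω * x k‖₊ : ℝ≥0∞)) ^ c) atTop
        (nhds (((‖ξ ω‖₊ : ℝ≥0∞)) ^ c)) := by
      apply (ENNReal.continuous_rpow_const.tendsto _).comp
      exact (ENNReal.tendsto_coe.2 ((continuous_nnnorm.tendsto _).comp hω))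
    exact this.liminf_eq.symm
  have hmain : (∫⁻ ω, ((‖ξ ω‖₊ : ℝ≥0∞)) ^ c ∂P)
      ≤ ENNReal.ofReal (2 * (2*m).factorial * Real.exp 1 * b^(2*m)) := by
    rw [lintegral_congr_ae hliminf]
    refine (lintegral_liminf_le (fun N => ?_)).trans ?_
    · exact ((rad_S_meas x hr N).nnnorm.coe_nnreal_ennreal).pow_const c
    · apply Filter.liminf_le_of_frequently_le'
      apply Filter.Frequently.of_forall
      intro N
      have iL : Integrable (fun ω => (∑ k ∈ Finset.range N, r k ω * x k)^(2*m)) P := by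
        refine int_of_ae_bdd (((rad_S_meas x hr N).pow_const _).aestronglyMeasurable)
          (C := (∑ k ∈ Finset.range N, |x k|)^(2*m)) ?_
        filter_upwards [rad_ae_absS x hr N] with ω hω
        rw [abs_pow]
        exact pow_le_pow_left₀ (abs_nonneg _) hω _
      have h1 : (∫⁻ ω, ((‖∑ k ∈ Finset.range N, r k ω * x k‖₊ : ℝ≥0∞)) ^ c ∂P)
          = ENNReal.ofReal (∫ ω, (∑ k ∈ Finset.range N, r k ω * x k)^(2*m) ∂P) := by
        rw [ofReal_integral_eq_lintegral_ofReal iL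
          (Filter.Eventually.of_forall fun ω => (even_two_mul m).pow_nonneg _)]
        apply lintegral_congr
        intro ω
        exact hpoint _
      rw [h1]
      exact ENNReal.ofReal_le_ofReal (rad_moment x hr hb hxb m N)
  calc (∫⁻ ω, ((‖ξ ω‖₊ : ℝ≥0∞)) ^ c ∂P) ^ (1/c)
      ≤ (ENNReal.ofReal (2 * (2*m).factorial * Real.exp 1 * b^(2*m))) ^ (1/c) :=
        ENNReal.rpow_le_rpow hmain (by positivity)
    _ = ENNReal.ofReal ((2 * (2*m).factorial * Real.exp 1 * b^(2*m)) ^ (1/c)) := by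
        rw [ENNReal.ofReal_rpow_of_nonneg (by positivity) (by positivity)]
    _ = ENNReal.ofReal ((2 * (2*m).factorial * Real.exp 1)^((1:ℝ)/(2*m)) * b) := by
        congr 1
        rw [Real.mul_rpow (by positivity) (by positivity)]
        congr 1
        · rw [hcdef]; norm_num
        · rw [← Real.rpow_natCast b (2*m), ← Real.rpow_mul hb.le]
          rw [hcdef]
          rw [show ((2*m : ℕ) : ℝ) * (1/((2*m:ℕ):ℝ)) = 1 by
            field_simp]
          exact Real.rpow_one b

end Rad


/-- Weighted Khintchine inequality with the improved threshold
`ℙ(w ≠ 0) > 1 - 2 e^{-2+γ}`. -/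
theorem weighted_khintchine_improved
    {Ω : Type*} [MeasurableSpace Ω] (P : Measure Ω) [IsProbabilityMeasure P]
    (r : ℕ → Ω → ℝ) (hr : IsRademacherSeq P r)
    (p q : ℝ) (hp : 0 < p) (hpq : p < q)
    (w : Ω → ℝ) (hw : MemLp w (ENNReal.ofReal q) P)
    (hw0 : P {ω | w ω ≠ 0} >
      ENNReal.ofReal (1 - 2 * Real.exp (-2 + Real.eulerMascheroniConstant))) :
    ∃ C₁ > (0:ℝ), ∃ C₂ > (0:ℝ), ∀ (x : ℕ → ℝ) (ξ : Ω → ℝ),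
      Summable (fun n => x n ^ 2) →
      (∀ᵐ ω ∂P, HasSum (fun n => r n ω * x n) (ξ ω)) →
      ENNReal.ofReal (C₁⁻¹ * (∑' n, x n ^ 2) ^ (1/2 : ℝ)) ≤
        eLpNorm (fun ω => w ω * ξ ω) (ENNReal.ofReal p) P ∧
      eLpNorm (fun ω => w ω * ξ ω) (ENNReal.ofReal p) P ≤
        ENNReal.ofReal (C₂ * (∑' n, x n ^ 2) ^ (1/2 : ℝ)) := by
  have hq : 0 < q := hp.trans hpq
  -- threshold
  have hw0' : ENNReal.ofReal 0.509 < P {ω | w ω ≠ 0} :=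
    lt_of_le_of_lt (ENNReal.ofReal_le_ofReal aux_threshold) hw0
  -- measurable version of w and choice of δ
  have hwsm : AEStronglyMeasurable w P := hw.aestronglyMeasurable
  set wm : Ω → ℝ := hwsm.mk w with hwmdef
  have hwae : w =ᵐ[P] wm := hwsm.ae_eq_mk
  have hwm : Measurable wm := hwsm.stronglyMeasurable_mk.measurable
  set U : ℕ → Set Ω := fun n => {ω | 1/(n+1 : ℝ) < |wm ω|} with hUdef
  have hUmeas : ∀ n, MeasurableSet (U n) := fun n => measurableSet_lt measurable_const hwm.abs
  have hUmono : Monotone U := by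
    intro a b hab ω h
    simp only [hUdef, Set.mem_setOf_eq] at h ⊢
    have : 1/(b+1 : ℝ) ≤ 1/(a+1 : ℝ) := by
      apply one_div_le_one_div_of_le (by positivity)
      exact_mod_cast by omega
    linarith
  have hUnion : (⋃ n, U n) = {ω | wm ω ≠ 0} := by
    ext ω
    simp only [Set.mem_iUnion, hUdef, Set.mem_setOf_eq]
    constructor
    · rintro ⟨n, hn⟩ h0
      rw [h0] at hn; simp at hn
      have : (0:ℝ) < 1/(n+1:ℝ) := by positivity
      linarith
    · intro h0
      have habs : 0 < |wm ω| := abs_pos.2 h0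
      obtain ⟨n, hn⟩ := exists_nat_one_div_lt habs
      exact ⟨n, hn⟩
  have hPwm : P {ω | wm ω ≠ 0} = P {ω | w ω ≠ 0} := by
    apply measure_congr
    filter_upwards [hwae] with ω h
    change (wm ω ≠ 0) = (w ω ≠ 0)
    rw [h]
  obtain ⟨n₀, hn₀⟩ : ∃ n, ENNReal.ofReal 0.509 < P (U n) := by
    rw [← hPwm, ← hUnion, hUmono.directed_le.measure_iUnion] at hw0'
    exact lt_iSup_iff.1 hw0'
  set δ : ℝ := 1/(n₀+1 : ℝ) with hδdef
  have hδpos : 0 < δ := by positivity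
  -- exponents for the upper bound
  set s₀ : ℝ := (p⁻¹ - q⁻¹)⁻¹ with hs₀def
  have hinv : 0 < p⁻¹ - q⁻¹ := by
    have h1 : q⁻¹ < p⁻¹ := by
      rw [inv_lt_inv₀ hq hp]
      exact hpq
    linarith
  have hs₀ : 0 < s₀ := by positivity
  set m : ℕ := ⌈s₀⌉₊ + 1 with hmdef
  have hm : 0 < m := by omega
  set K : ℝ := (2 * (2*m).factorial * Real.exp 1)^((1:ℝ)/(2*m)) with hKdef
  have hKpos : 0 < K := by
    apply Real.rpow_pos_of_pos
    positivity
  set W : ℝ := (eLpNorm w (ENNReal.ofReal q) P).toReal with hWdef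
  have hWnn : 0 ≤ W := ENNReal.toReal_nonneg
  refine ⟨(δ * (1/200) * (0.008:ℝ)^(1/p))⁻¹, by positivity, (W+1)*K, by positivity, ?_⟩
  intro x ξ hsum ha
  have haesm : AEStronglyMeasurable ξ P := by
    apply aestronglyMeasurable_of_tendsto_ae atTop
      (fun N => (rad_S_meas x hr N).aestronglyMeasurable)
    filter_upwards [ha] with ω hω
    exact hω.tendsto_sum_nat
  set T : ℝ := ∑' n, (x n)^2 with hTdef
  have hTnn : 0 ≤ T := tsum_nonneg (fun n => sq_nonneg (x n))
  rcases eq_or_lt_of_le hTnn with hT0 | hTpos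
  · -- degenerate case : all x n = 0
    have hx0 : ∀ n, x n = 0 := by
      intro n
      have h2 : (x n)^2 ≤ T := Summable.le_tsum hsum n (fun j _ => sq_nonneg (x j))
      have h3 : (x n)^2 = 0 := le_antisymm (by linarith [hT0]) (sq_nonneg _)
      exact pow_eq_zero_iff (by norm_num : 2 ≠ 0) |>.1 h3
    have hξ0 : ∀ᵐ ω ∂P, ξ ω = 0 := by
      filter_upwards [ha] with ω hω
      have : HasSum (fun n => r n ω * x n) 0 := by
        have : (fun n => r n ω * x n) = fun _ => 0 := by
          funext n; rw [hx0 n, mul_zero]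
        rw [this]
        exact hasSum_zero
      exact hω.unique this
    have hwξ0 : (fun ω => w ω * ξ ω) =ᵐ[P] (fun _ => (0:ℝ)) := by
      filter_upwards [hξ0] with ω h
      rw [h, mul_zero]
    have heL : eLpNorm (fun ω => w ω * ξ ω) (ENNReal.ofReal p) P = 0 := by
      rw [eLpNorm_congr_ae hwξ0]
      exact eLpNorm_zero
    constructor
    · rw [← hT0, Real.zero_rpow (by norm_num : (1/2:ℝ) ≠ 0), mul_zero]
      simp
    · rw [heL]
      exact zero_le
  · -- main case
    set σ : ℝ := Real.sqrt T with hσdef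
    have hσpos : 0 < σ := Real.sqrt_pos.2 hTpos
    have hσ2 : σ^2 = T := Real.sq_sqrt hTnn
    have hrw : T ^ (1/2 : ℝ) = σ := by
      rw [hσdef, Real.sqrt_eq_rpow]
    have hxb : ∀ N, ∑ k ∈ Finset.range N, (x k)^2 ≤ σ^2 := by
      intro N
      rw [hσ2]
      exact Summable.sum_le_tsum (Finset.range N) (fun k _ => sq_nonneg (x k)) hsum
    constructor
    · -- LOWER BOUND
      set ξm : Ω → ℝ := haesm.mk ξ with hξmdef
      have hξae : ξ =ᵐ[P] ξm := haesm.ae_eq_mk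
      have hξm : Measurable ξm := haesm.stronglyMeasurable_mk.measurable
      have ham : ∀ᵐ ω ∂P, HasSum (fun n => r n ω * x n) (ξm ω) := by
        filter_upwards [ha, hξae] with ω h1 h2
        rwa [h2] at h1
      have hDP : P {ω | |ξm ω| < σ/200} ≤ ENNReal.ofReal 0.5006 :=
        rad_tail_limit x hr ξm hsum ham hTpos
      set Ds : Set Ω := {ω | |ξm ω| < σ/200} with hDsdef
      have hDsm : MeasurableSet Ds := measurableSet_lt hξm.abs measurable_const
      set E : Set Ω := U n₀ ∩ Dsᶜ with hEdef
      have hEm : MeasurableSet E := (hUmeas n₀).inter hDsm.compl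
      have hPE : ENNReal.ofReal 0.008 ≤ P E := by
        have hsub : U n₀ ⊆ E ∪ Ds := by
          intro ω hω
          by_cases h : ω ∈ Ds
          · exact Or.inr h
          · exact Or.inl ⟨hω, h⟩
        have h1 : P (U n₀) ≤ P E + P Ds := (measure_mono hsub).trans (measure_union_le _ _)
        have h2 : ENNReal.ofReal 0.0084 + ENNReal.ofReal 0.5006 ≤ P E + ENNReal.ofReal 0.5006 := by
          rw [← ENNReal.ofReal_add (by norm_num) (by norm_num)]
          have e1 : (0.0084 : ℝ) + 0.5006 = 0.509 := by norm_num
          rw [e1]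
          calc ENNReal.ofReal (0.509 : ℝ) ≤ P (U n₀) := hn₀.le
            _ ≤ P E + P Ds := h1
            _ ≤ P E + ENNReal.ofReal 0.5006 := add_le_add_right hDP _
        have h3 := (ENNReal.add_le_add_iff_right (ENNReal.ofReal_ne_top)).1 h2
        exact le_trans (ENNReal.ofReal_le_ofReal (by norm_num)) h3
      set c : ℝ := δ * (σ/200) with hcdef
      have hcpos : 0 < c := by positivity
      have hlowae : ∀ᵐ ω ∂P, ω ∈ E → ENNReal.ofReal (c^p) ≤ (‖w ω * ξ ω‖₊ : ℝ≥0∞) ^ p := by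
        filter_upwards [hwae, hξae] with ω h1 h2 hE
        obtain ⟨hU, hD⟩ := hE
        have hUω : δ < |wm ω| := hU
        have hDω : σ/200 ≤ |ξm ω| := not_lt.1 hD
        have habs : c ≤ |w ω * ξ ω| := by
          rw [abs_mul, h1, h2]
          calc c = δ * (σ/200) := hcdef
            _ ≤ |wm ω| * |ξm ω| := by
                apply mul_le_mul hUω.le hDω (by positivity) (abs_nonneg _)
        rw [← enorm_eq_nnnorm, Real.enorm_eq_ofReal_abs, ENNReal.ofReal_rpow_of_nonneg (abs_nonneg _) hp.le]
        exact ENNReal.ofReal_le_ofReal (Real.rpow_le_rpow hcpos.le habs hp.le)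
      have hp0 : ENNReal.ofReal p ≠ 0 := by
        simp [ENNReal.ofReal_eq_zero]; linarith
      rw [eLpNorm_eq_lintegral_rpow_enorm_toReal hp0 ENNReal.ofReal_ne_top,
        ENNReal.toReal_ofReal hp.le]
      simp only [enorm_eq_nnnorm]
      have hstep : ENNReal.ofReal (c^p) * ENNReal.ofReal 0.008
          ≤ ∫⁻ ω, (‖w ω * ξ ω‖₊ : ℝ≥0∞) ^ p ∂P := by
        calc ENNReal.ofReal (c^p) * ENNReal.ofReal 0.008
            ≤ ENNReal.ofReal (c^p) * P E := by
              exact mul_le_mul_right hPE _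
          _ = ∫⁻ ω in E, ENNReal.ofReal (c^p) ∂P := by rw [setLIntegral_const, mul_comm]
          _ ≤ ∫⁻ ω in E, (‖w ω * ξ ω‖₊ : ℝ≥0∞) ^ p ∂P := by
              apply lintegral_mono_ae
              exact (ae_restrict_iff' hEm).2 hlowae
          _ ≤ ∫⁻ ω, (‖w ω * ξ ω‖₊ : ℝ≥0∞) ^ p ∂P := setLIntegral_le_lintegral E _
      calc ENNReal.ofReal ((δ * (1/200) * (0.008:ℝ)^(1/p))⁻¹⁻¹ * T ^ (1/2:ℝ))
          = ENNReal.ofReal (c * (0.008:ℝ)^(1/p)) := by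
            rw [inv_inv, hrw, hcdef]
            congr 1
            ring
        _ = (ENNReal.ofReal (c^p) * ENNReal.ofReal 0.008) ^ (1/p) := by
            rw [← ENNReal.ofReal_mul (by positivity),
              ENNReal.ofReal_rpow_of_nonneg (by positivity) (by positivity)]
            congr 1
            rw [Real.mul_rpow (by positivity) (by norm_num), ← Real.rpow_mul hcpos.le,
              mul_one_div, div_self hp.ne', Real.rpow_one]
        _ ≤ _ := ENNReal.rpow_le_rpow hstep (by positivity)
    · -- UPPER BOUND
      have hHold : 1/(ENNReal.ofReal p) = 1/(ENNReal.ofReal q) + 1/(ENNReal.ofReal s₀) := by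
        rw [one_div, one_div, one_div, ← ENNReal.ofReal_inv_of_pos hp,
          ← ENNReal.ofReal_inv_of_pos hq, ← ENNReal.ofReal_inv_of_pos hs₀,
          ← ENNReal.ofReal_add (by positivity) (by positivity)]
        congr 1
        rw [hs₀def, inv_inv]
        ring
      haveI : ENNReal.HolderTriple (ENNReal.ofReal q) (ENNReal.ofReal s₀) (ENNReal.ofReal p) :=
        ⟨by rw [← one_div, ← one_div, ← one_div]; exact hHold.symm⟩
      have hHolder0 := eLpNorm_le_eLpNorm_mul_eLpNorm_of_nnnorm (p := ENNReal.ofReal q)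
        (q := ENNReal.ofReal s₀) (r := ENNReal.ofReal p) hwsm haesm
        (fun a b => a * b) 1
        (Filter.Eventually.of_forall fun ω => by rw [one_mul]; exact le_of_eq (nnnorm_mul _ _))
      have hHolder : eLpNorm (fun ω => w ω * ξ ω) (ENNReal.ofReal p) P
          ≤ eLpNorm w (ENNReal.ofReal q) P * eLpNorm ξ (ENNReal.ofReal s₀) P := by
        rw [ENNReal.coe_one, one_mul] at hHolder0; exact hHolder0
      have hs2m : ENNReal.ofReal s₀ ≤ ((2*m : ℕ) : ℝ≥0∞) := by
        rw [← ENNReal.ofReal_natCast (2*m)]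
        apply ENNReal.ofReal_le_ofReal
        have h1 : s₀ ≤ ⌈s₀⌉₊ := Nat.le_ceil s₀
        have h2 : (⌈s₀⌉₊ : ℝ) ≤ ((2*m : ℕ) : ℝ) := by
          rw [hmdef]
          push_cast
          have : (0:ℝ) ≤ ⌈s₀⌉₊ := by positivity
          linarith
        linarith
      have hmono := eLpNorm_le_eLpNorm_of_exponent_le hs2m haesm
      have hxi := rad_eLpNorm_xi x hr ξ ha hσpos hxb m hm
      have hWfin : eLpNorm w (ENNReal.ofReal q) P = ENNReal.ofReal W := by
        rw [hWdef, ENNReal.ofReal_toReal hw.2.ne]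
      calc eLpNorm (fun ω => w ω * ξ ω) (ENNReal.ofReal p) P
          ≤ eLpNorm w (ENNReal.ofReal q) P * eLpNorm ξ (ENNReal.ofReal s₀) P := hHolder
        _ ≤ ENNReal.ofReal W * ENNReal.ofReal (K * σ) := by
            apply mul_le_mul'
            · rw [hWfin]
            · exact (hmono.trans hxi).trans (le_of_eq (by rw [hKdef]))
        _ = ENNReal.ofReal (W * (K * σ)) := by
            rw [← ENNReal.ofReal_mul hWnn]
        _ ≤ ENNReal.ofReal ((W+1)*K * T ^ (1/2:ℝ)) := by
            apply ENNReal.ofReal_le_ofReal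
            rw [hrw]
            nlinarith [hσpos.le, hKpos.le]
end

section
/- The condition ℙ(w ≠ 0) > 1 − 2 e^{−2+γ} in the weighted Khintchine inequality is close to optimal: let w = 1_{\{r₁ + r₂ ≠ 0\}} and ξ = r₁ − r₂. Then ℙ(w ≠ 0) = 1/2, Σ_{n} x_n² = 2 > 0, but w ξ = 0 almost surely; in particular ‖w ξ‖_p = 0 for every p > 0, so no inequality of the form C⁻¹ (Σ_n x_n²)^{1/2} ≤ ‖w ξ‖_p can hold. -/
open MeasureTheory ProbabilityTheory ENNReal

/-- Optimality example: with `w = 1_{r₀ + r₁ ≠ 0}` and `ξ = r₀ - r₁` one has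
`ℙ(w ≠ 0) = 1/2` while `w ξ = 0` almost surely; in particular `‖w ξ‖_p = 0`
for every `p > 0`, so no lower weighted Khintchine inequality can hold. -/
theorem weighted_khintchine_optimality_example
    {Ω : Type*} [MeasurableSpace Ω] (P : Measure Ω) [IsProbabilityMeasure P]
    (r : ℕ → Ω → ℝ) (hr : IsRademacherSeq P r)
    (w ξ : Ω → ℝ)
    (hw : w = fun ω => if r 0 ω + r 1 ω ≠ 0 then 1 else 0)
    (hξ : ξ = fun ω => r 0 ω - r 1 ω) :
    P {ω | w ω ≠ 0} = 1/2 ∧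
    (fun ω => w ω * ξ ω) =ᵐ[P] (fun _ => (0:ℝ)) ∧
    ∀ p : ℝ, 0 < p → eLpNorm (fun ω => w ω * ξ ω) (ENNReal.ofReal p) P = 0 := by
  obtain ⟨hmeas, hindep, hval⟩ := hr
  have hA : ∀ n : ℕ, ∀ c : ℝ, MeasurableSet {ω | r n ω = c} := fun n c =>
    (hmeas n) (measurableSet_singleton c)
  -- each r n is a.s. in {1, -1}
  have hG : ∀ n : ℕ, P ({ω | r n ω = 1} ∪ {ω | r n ω = -1}) = 1 := by
    intro n
    have hd : Disjoint {ω | r n ω = 1} {ω | r n ω = -1} := by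
      rw [Set.disjoint_left]
      intro ω h1 h2
      simp only [Set.mem_setOf_eq] at h1 h2
      rw [h1] at h2; norm_num at h2
    rw [measure_union hd (hA n (-1)), (hval n).1, (hval n).2, ENNReal.div_add_div_same,
      one_add_one_eq_two]
    exact ENNReal.div_self (by norm_num) ENNReal.ofNat_ne_top
  -- the good set
  set G : Set Ω := ({ω | r 0 ω = 1} ∪ {ω | r 0 ω = -1}) ∩
      ({ω | r 1 ω = 1} ∪ {ω | r 1 ω = -1}) with hGdef
  have hGmeas : MeasurableSet G := ((hA 0 1).union (hA 0 (-1))).inter ((hA 1 1).union (hA 1 (-1)))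
  have hGc : P Gᶜ = 0 := by
    rw [hGdef, Set.compl_inter]
    refine measure_union_null ?_ ?_ <;>
      rw [prob_compl_eq_zero_iff (by exact (hA _ 1).union (hA _ (-1)))]
    · exact hG 0
    · exact hG 1
  -- independence of r 0 and r 1
  have hind01 : IndepFun (r 0) (r 1) P := hindep.indepFun (by norm_num)
  have hmul : ∀ a b : ℝ, P ({ω | r 0 ω = a} ∩ {ω | r 1 ω = b})
      = P {ω | r 0 ω = a} * P {ω | r 1 ω = b} := by
    intro a b
    have := hind01.measure_inter_preimage_eq_mul {a} {b}
      (measurableSet_singleton a) (measurableSet_singleton b)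
    simpa [Set.preimage] using this
  -- w ≠ 0 iff the sum is nonzero
  have hwne : ∀ ω, w ω ≠ 0 ↔ r 0 ω + r 1 ω ≠ 0 := by
    intro ω
    rw [hw]
    by_cases h : r 0 ω + r 1 ω = 0 <;> simp [h]
  -- w ξ vanishes on G
  have hzero : ∀ ω, ω ∈ G → w ω * ξ ω = 0 := by
    intro ω hωG
    obtain ⟨h0 | h0, h1 | h1⟩ := hωG <;>
      simp only [Set.mem_setOf_eq] at h0 h1 <;>
      simp only [hw, hξ] <;> rw [h0, h1] <;> norm_num
  have harith : (1/2 : ℝ≥0∞) * (1/2) + 1/2 * (1/2) = 1/2 := by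
    rw [← add_mul, ENNReal.div_add_div_same, one_add_one_eq_two,
      ENNReal.div_self (by norm_num) ENNReal.ofNat_ne_top, one_mul]
  -- first claim
  have h1 : P {ω | w ω ≠ 0} = 1/2 := by
    have hSeq : {ω | w ω ≠ 0} ∩ G
        = ({ω | r 0 ω = 1} ∩ {ω | r 1 ω = 1}) ∪ ({ω | r 0 ω = -1} ∩ {ω | r 1 ω = -1}) := by
      ext ω
      simp only [Set.mem_inter_iff, Set.mem_union, Set.mem_setOf_eq, hwne]
      constructor
      · rintro ⟨hne, h0 | h0, h1 | h1⟩
        · exact Or.inl ⟨h0, h1⟩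
        · exact absurd (by rw [h0, h1]; ring) hne
        · exact absurd (by rw [h0, h1]; ring) hne
        · exact Or.inr ⟨h0, h1⟩
      · rintro (⟨h0, h1⟩ | ⟨h0, h1⟩) <;>
          exact ⟨by rw [h0, h1]; norm_num, by simp [h0], by simp [h1]⟩
    have key : P ({ω | w ω ≠ 0} ∩ G) = 1/2 := by
      rw [hSeq]
      have hd : Disjoint ({ω | r 0 ω = 1} ∩ {ω | r 1 ω = 1})
          ({ω | r 0 ω = -1} ∩ {ω | r 1 ω = -1}) := by
        rw [Set.disjoint_left]
        rintro ω ⟨h0, _⟩ ⟨h0', _⟩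
        simp only [Set.mem_setOf_eq] at h0 h0'
        rw [h0] at h0'; norm_num at h0'
      rw [measure_union hd ((hA 0 (-1)).inter (hA 1 (-1))), hmul, hmul,
        (hval 0).1, (hval 1).1, (hval 0).2, (hval 1).2]
      exact harith
    have : P {ω | w ω ≠ 0} = P ({ω | w ω ≠ 0} ∩ G) := by
      rw [← measure_inter_add_diff {ω | w ω ≠ 0} hGmeas]
      have : P ({ω | w ω ≠ 0} \ G) = 0 :=
        measure_mono_null (Set.diff_subset_compl _ _) hGc
      rw [this, add_zero]
    rw [this, key]
  -- a.e. vanishing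
  have hae : (fun ω => w ω * ξ ω) =ᵐ[P] (fun _ => (0:ℝ)) := by
    have hsub : {ω | w ω * ξ ω ≠ 0} ⊆ Gᶜ := by
      intro ω hω
      simp only [Set.mem_setOf_eq] at hω
      exact fun hωG => hω (hzero ω hωG)
    have hnull : P {ω | w ω * ξ ω ≠ 0} = 0 := measure_mono_null hsub hGc
    filter_upwards [measure_eq_zero_iff_ae_notMem.mp hnull] with ω hω
    exact not_not.mp hω
  refine ⟨h1, hae, fun p hp => ?_⟩
  rw [eLpNorm_congr_ae hae]
  exact eLpNorm_zero
end
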